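/- arXiv:1607.03791 — 4 statements merged into one kernel-verified Lean document; each statement's English description precedes it below -/
import Mathlib

section
/- In a star-shaped shadow-complete instance, the tree augmentation problem on (G, L, c) is equivalent to a minimum-cost edge cover problem: feasible augmentation solutions correspond bijectively (preserving cost) to edge covers of the auxiliary graph H whose vertex set is the leaves of G together with the hub r, where each link touching a leaf becomes an edge of H and r carries a cost-zero self-loop. -/
open SimpleGraph

/-- The unique path between two vertices of a tree, as a walk. -/
noncomputable def tpath {V : Type*} (G : SimpleGraph V) (hG : G.IsTree) (u v : V) : G.Walk u v :=
  (hG.existsUnique_path u v).choose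

/-- The set of edges of the unique `u`-`v` path in the tree `G`. -/
noncomputable def pathEdges {V : Type*} (G : SimpleGraph V) (hG : G.IsTree) (u v : V) :
    Set (Sym2 V) := {e | e ∈ (tpath G hG u v).edges}

section Helpers
set_option linter.unusedSectionVars false
variable {V : Type*} [DecidableEq V] {G : SimpleGraph V} (hG : G.IsTree)
include hG

lemma tpath_isPath (u v : V) : (tpath G hG u v).IsPath :=
  (hG.existsUnique_path u v).choose_spec.1

lemma tpath_unique {u v : V} (p : G.Walk u v) (hp : p.IsPath) : p = tpath G hG u v :=
  (hG.existsUnique_path u v).choose_spec.2 p hp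

lemma tpath_adj {u t : V} (h : G.Adj u t) :
    tpath G hG u t = Walk.cons h Walk.nil := by
  refine (tpath_unique hG _ ?_).symm
  simp [Walk.cons_isPath_iff, h.ne]

lemma ne_of_edge_tpath {w r : V} {e : Sym2 V} (h : e ∈ (tpath G hG w r).edges) : w ≠ r := by
  intro hwr
  subst hwr
  rw [Walk.isPath_iff_eq_nil.mp (tpath_isPath hG _ _)] at h
  simp at h

lemma neighbor_unique [Fintype V] [DecidableRel G.Adj]
    {w z z' : V} (hw : G.degree w = 1) (h : G.Adj w z) (h' : G.Adj w z') : z = z' := by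
  obtain ⟨a, ha⟩ := Finset.card_eq_one.mp hw
  have hz : z ∈ G.neighborFinset w := by simp [h]
  have hz' : z' ∈ G.neighborFinset w := by simp [h']
  rw [ha, Finset.mem_singleton] at hz hz'
  rw [hz, hz']

lemma neighbors_in_path_unique {u r : V} {p : G.Walk u r} (hp : p.IsPath) {t1 t2 : V}
    (h1 : G.Adj u t1) (h2 : G.Adj u t2) (m1 : t1 ∈ p.support) (m2 : t2 ∈ p.support) :
    t1 = t2 := by
  have key : ∀ {t : V} (h : G.Adj u t) (m : t ∈ p.support),
      ∃ l, p.edges = s(u, t) :: l := by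
    intro t h m
    have htake : p.takeUntil t m = Walk.cons h Walk.nil :=
      (tpath_unique hG _ (hp.takeUntil m)).trans (tpath_adj hG h)
    refine ⟨(p.dropUntil t m).edges, ?_⟩
    conv_lhs => rw [← p.take_spec m]
    rw [Walk.edges_append, htake]
    simp
  obtain ⟨l1, e1⟩ := key h1 m1
  obtain ⟨l2, e2⟩ := key h2 m2
  rw [e1] at e2
  have := (List.cons.injEq _ _ _ _).mp e2
  exact Sym2.congr_right.mp this.1

lemma leaf_endpoint [Fintype V] [DecidableRel G.Adj]
    {a b w : V} {p : G.Walk a b} (hp : p.IsPath) (hw : G.degree w = 1)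
    (hmem : w ∈ p.support) : w = a ∨ w = b := by
  by_contra hcon
  push_neg at hcon
  obtain ⟨ha, hb⟩ := hcon
  obtain ⟨y, hy, d', hd⟩ := Walk.exists_eq_cons_of_ne hb (p.dropUntil w hmem)
  obtain ⟨x, hx, q', hq⟩ := Walk.exists_eq_cons_of_ne ha (p.takeUntil w hmem).reverse
  have hxy : x = y := neighbor_unique hG hw hx hy
  have hxq : x ∈ (p.takeUntil w hmem).support := by
    have : x ∈ (p.takeUntil w hmem).reverse.support := by
      rw [hq]; simp
    rwa [Walk.support_reverse, List.mem_reverse] at this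
  have hyd : y ∈ (p.dropUntil w hmem).support.tail := by
    rw [hd]; simp
  have hnodup : (p.support).Nodup := hp.support_nodup
  rw [← p.take_spec hmem, Walk.support_append] at hnodup
  have hdisj := List.disjoint_of_nodup_append hnodup
  exact hdisj hxq (hxy ▸ hyd)

lemma edge_mem_tpath_to_r (r : V) {y z : V} (h : G.Adj y z) :
    s(y, z) ∈ (tpath G hG y r).edges ∨ s(y, z) ∈ (tpath G hG z r).edges := by
  by_cases hy : y ∈ (tpath G hG z r).support
  · right
    have hq : (tpath G hG z r).takeUntil y hy = Walk.cons h.symm Walk.nil :=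
      (tpath_unique hG _ ((tpath_isPath hG z r).takeUntil hy)).trans (tpath_adj hG h.symm)
    have : s(z, y) ∈ (tpath G hG z r).edges :=
      Walk.edges_takeUntil_subset _ hy (by rw [hq]; simp)
    rwa [Sym2.eq_swap]
  · left
    have hcons : (Walk.cons h (tpath G hG z r)).IsPath := (tpath_isPath hG z r).cons hy
    rw [← tpath_unique hG _ hcons]
    simp

lemma exists_leaf_path [Fintype V] [DecidableRel G.Adj]
    (r : V) {e : Sym2 V} (he : e ∈ G.edgeSet) :
    ∃ w, G.degree w = 1 ∧ e ∈ (tpath G hG w r).edges := by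
  induction e with
  | _ y z =>
  rw [mem_edgeSet] at he
  suffices H : ∀ n u, Fintype.card V - (tpath G hG u r).length ≤ n →
      s(y, z) ∈ (tpath G hG u r).edges →
      ∃ w, G.degree w = 1 ∧ s(y, z) ∈ (tpath G hG w r).edges by
    rcases edge_mem_tpath_to_r hG r he with h' | h'
    exacts [H _ y le_rfl h', H _ z le_rfl h']
  intro n
  induction n with
  | zero =>
    intro u h0 hu
    have := (tpath_isPath hG u r).length_lt
    omega
  | succ n ih =>
    intro u hn hu
    by_cases hdeg : G.degree u = 1
    · exact ⟨u, hdeg, hu⟩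
    have hur : u ≠ r := ne_of_edge_tpath hG hu
    obtain ⟨t0, ht0, p', hp'⟩ := Walk.exists_eq_cons_of_ne hur (tpath G hG u r)
    obtain ⟨t, ht, htn⟩ : ∃ t, G.Adj u t ∧ t ∉ (tpath G hG u r).support := by
      by_contra hcon
      push_neg at hcon
      apply hdeg
      have ht0m : t0 ∈ (tpath G hG u r).support := by rw [hp']; simp
      have : G.neighborFinset u = {t0} := by
        ext t
        simp only [mem_neighborFinset, Finset.mem_singleton]
        constructor
        · intro hadj
          exact neighbors_in_path_unique hG (tpath_isPath hG u r) hadj ht0 (hcon t hadj) ht0m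
        · rintro rfl; exact ht0
      rw [SimpleGraph.degree, this, Finset.card_singleton]
    have hq : (Walk.cons ht.symm (tpath G hG u r)).IsPath := (tpath_isPath hG u r).cons htn
    have heq := tpath_unique hG _ hq
    refine ih t ?_ ?_
    · rw [← heq]
      have := (tpath_isPath hG u r).length_lt
      simp only [Walk.length_cons]
      omega
    · rw [← heq]
      simp [hu]
end Helpers

/-- The edges of the auxiliary graph `H`: one edge per link (`Sum.inl ℓ`) plus a
cost-zero self-loop at the hub (`Sum.inr ()`).  The vertex `w` of `H` is incident to
the `H`-edge corresponding to the link `ℓ = (u,v)` if `w` is a leaf endpoint of `ℓ`,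
or if `w = r` and `ℓ` has an internal (non-leaf) endpoint; the self-loop is incident
only to the hub `r`. -/
def HIncident {V : Type*} (leaf : V → Prop) (r w : V) : (V × V) ⊕ Unit → Prop
  | Sum.inl ℓ => (leaf ℓ.1 ∧ w = ℓ.1) ∨ (leaf ℓ.2 ∧ w = ℓ.2) ∨
      ((¬ leaf ℓ.1 ∨ ¬ leaf ℓ.2) ∧ w = r)
  | Sum.inr _ => w = r

/-- The cost of an edge of `H`: the cost of the corresponding link; the self-loop at
the hub has cost `0`. -/
def HCost {V : Type*} (c : V × V → ℝ) : (V × V) ⊕ Unit → ℝ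
  | Sum.inl ℓ => c ℓ
  | Sum.inr _ => 0

/-- For a star-shaped shadow-complete instance with hub `r` in which
every link touches a leaf, tree augmentation on `(G, L, c)` is equivalent to minimum-cost
edge cover on the auxiliary graph `H` (vertices: the leaves of `G` together with `r`):
a set of links `C ⊆ L` is a feasible augmentation solution iff the corresponding edge set
of `H` (together with the self-loop at `r`) is an edge cover of `H`, and the
correspondence preserves cost. -/
theorem star_shaped_equiv_edge_cover {V : Type*} [Fintype V] [DecidableEq V]
    (G : SimpleGraph V) [DecidableRel G.Adj] (hG : G.IsTree) (r : V)
    (L : Finset (V × V)) (c : V × V → ℝ)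
    (hstar : ∀ ℓ ∈ L, r ∈ (tpath G hG ℓ.1 ℓ.2).support)
    (hleaf : ∀ ℓ ∈ L, G.degree ℓ.1 = 1 ∨ G.degree ℓ.2 = 1)
    (C : Finset (V × V)) (hC : C ⊆ L) :
    ((∀ w : V, (G.degree w = 1 ∨ w = r) →
        ∃ x ∈ (C.image Sum.inl ∪ {Sum.inr ()} : Finset ((V × V) ⊕ Unit)),
          HIncident (fun u => G.degree u = 1) r w x) ↔
      (∀ e ∈ G.edgeSet, ∃ ℓ ∈ C, e ∈ pathEdges G hG ℓ.1 ℓ.2)) ∧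
    ∑ x ∈ (C.image Sum.inl ∪ {Sum.inr ()} : Finset ((V × V) ⊕ Unit)), HCost c x
      = ∑ ℓ ∈ C, c ℓ := by
  constructor
  · constructor
    · -- feasibility: edge cover of H implies all tree edges covered
      intro hcov e he
      obtain ⟨w, hw, hwe⟩ := exists_leaf_path hG r he
      have hwr : w ≠ r := ne_of_edge_tpath hG hwe
      obtain ⟨x, hx, hinc⟩ := hcov w (Or.inl hw)
      rcases x with ℓ | u
      · simp only [HIncident] at hinc
        have hℓC : ℓ ∈ C := by
          rcases Finset.mem_union.mp hx with h' | h'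
          · obtain ⟨ℓ', hℓ', hEq⟩ := Finset.mem_image.mp h'
            exact (Sum.inl.inj hEq) ▸ hℓ'
          · simp at h'
        refine ⟨ℓ, hℓC, ?_⟩
        have hr : r ∈ (tpath G hG ℓ.1 ℓ.2).support := hstar ℓ (hC hℓC)
        simp only [pathEdges, Set.mem_setOf_eq]
        rcases hinc with ⟨_, hw1⟩ | ⟨_, hw2⟩ | ⟨_, hwr'⟩
        · subst hw1
          have heq : (tpath G hG ℓ.1 ℓ.2).takeUntil r hr = tpath G hG ℓ.1 r :=
            tpath_unique hG _ ((tpath_isPath hG ℓ.1 ℓ.2).takeUntil hr)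
          rw [← heq] at hwe
          exact Walk.edges_takeUntil_subset _ hr hwe
        · subst hw2
          have heq : ((tpath G hG ℓ.1 ℓ.2).dropUntil r hr).reverse = tpath G hG ℓ.2 r :=
            tpath_unique hG _ ((tpath_isPath hG ℓ.1 ℓ.2).dropUntil hr).reverse
          rw [← heq, Walk.edges_reverse, List.mem_reverse] at hwe
          exact Walk.edges_dropUntil_subset _ hr hwe
        · exact absurd hwr' hwr
      · simp only [HIncident] at hinc
        exact absurd hinc hwr
    · -- edge cover from feasibility
      intro hfeas w hw
      by_cases hwr : w = r
      · exact ⟨Sum.inr (), Finset.mem_union_right _ (Finset.mem_singleton_self _), hwr⟩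
      · have hw1 : G.degree w = 1 := hw.resolve_right hwr
        obtain ⟨z, hz⟩ := Finset.card_pos.mp (show 0 < (G.neighborFinset w).card by rw [G.card_neighborFinset_eq_degree, hw1]; norm_num)
        have hadj : G.Adj w z := (mem_neighborFinset G w z).mp hz
        obtain ⟨ℓ, hℓ, hme⟩ := hfeas s(w, z) (G.mem_edgeSet.mpr hadj)
        simp only [pathEdges, Set.mem_setOf_eq] at hme
        have hws : w ∈ (tpath G hG ℓ.1 ℓ.2).support :=
          Walk.fst_mem_support_of_mem_edges _ hme
        refine ⟨Sum.inl ℓ, Finset.mem_union_left _ (Finset.mem_image_of_mem _ hℓ), ?_⟩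
        simp only [HIncident]
        rcases leaf_endpoint hG (tpath_isPath hG ℓ.1 ℓ.2) hw1 hws with h | h
        · exact Or.inl ⟨h ▸ hw1, h⟩
        · exact Or.inr (Or.inl ⟨h ▸ hw1, h⟩)
  · have hdisj : Disjoint (C.image Sum.inl) ({Sum.inr ()} : Finset ((V × V) ⊕ Unit)) := by
      simp
    rw [Finset.sum_union hdisj, Finset.sum_singleton,
        Finset.sum_image (fun a _ b _ h => Sum.inl.inj h)]
    simp [HCost]
end

section
/- If x is a fractional edge cover of a graph G with costs c ≥ 0, then there exists an integral edge cover C with c(C) ≤ (4/3) · cᵀx. In other words, the integrality gap of the fractional edge cover LP is at most 4/3. -/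
open Finset SimpleGraph

section Aux
variable {V : Type*} [Fintype V] [DecidableEq V]

/-- Sum of 0/1-valued reals is a natural number. -/
lemma sum_zero_one_nat' {α : Type*} (s : Finset α) (f : α → ℝ)
    (h : ∀ a ∈ s, f a = 0 ∨ f a = 1) : ∃ n : ℕ, ∑ a ∈ s, f a = n := by
  induction s using Finset.cons_induction with
  | empty => exact ⟨0, by simp⟩
  | cons a s ha ih =>
    obtain ⟨n, hn⟩ := ih fun b hb => h b (by simp [hb])
    rcases h a (by simp) with h0 | h1
    · exact ⟨n, by rw [Finset.sum_cons, h0, hn]; ring⟩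
    · exact ⟨n + 1, by rw [Finset.sum_cons, h1, hn]; push_cast; ring⟩

/-- In a graph of max degree ≤ 2 with nonneg costs, there is a matching
containing ≥ 1/3 of the total cost. -/
lemma exists_heavy_matching' {V : Type*} [DecidableEq V] (c : Sym2 V → ℝ)
    (H : Finset (Sym2 V)) (hc : ∀ e ∈ H, 0 ≤ c e)
    (hdeg : ∀ v : V, ({e ∈ H | v ∈ e}).card ≤ 2) :
    ∃ D ⊆ H, (∀ v : V, ({e ∈ D | v ∈ e}).card ≤ 1) ∧
      (1/3) * ∑ e ∈ H, c e ≤ ∑ e ∈ D, c e := by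
  generalize hn : H.card = n
  induction n using Nat.strong_induction_on generalizing H with
  | _ n ih =>
  subst hn
  rcases Finset.eq_empty_or_nonempty H with rfl | hne
  · exact ⟨∅, by simp⟩
  obtain ⟨e₀, he₀H, he₀max⟩ := H.exists_max_image c hne
  obtain ⟨a, b, rfl⟩ := Sym2.exists.mp ⟨e₀, rfl⟩
  set N : Finset (Sym2 V) := {e ∈ H | a ∈ e ∨ b ∈ e} with hN
  have he₀N : s(a,b) ∈ N := by simp [hN, he₀H]
  have hNsub : N ⊆ H := Finset.filter_subset _ _
  have hNcard : N.card ≤ 3 := by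
    have h1 : N ⊆ ({e ∈ H | a ∈ e} ∪ {e ∈ H | b ∈ e}) := by
      intro e he; simp only [hN, mem_filter, mem_union] at *; tauto
    have h2 : s(a,b) ∈ ({e ∈ H | a ∈ e} ∩ {e ∈ H | b ∈ e}) := by simp [he₀H]
    have h3 := Finset.card_union_add_card_inter ({e ∈ H | a ∈ e}) ({e ∈ H | b ∈ e})
    have h4 := Finset.card_le_card h1
    have h5 : 1 ≤ ({e ∈ H | a ∈ e} ∩ {e ∈ H | b ∈ e}).card := Finset.card_pos.mpr ⟨_, h2⟩
    have := hdeg a; have := hdeg b; omega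
  have hNcost : ∑ e ∈ N, c e ≤ 3 * c (s(a,b)) := by
    calc ∑ e ∈ N, c e ≤ ∑ _e ∈ N, c (s(a,b)) :=
          Finset.sum_le_sum fun e he => he₀max e (hNsub he)
      _ = N.card * c (s(a,b)) := by rw [Finset.sum_const, nsmul_eq_mul]
      _ ≤ 3 * c (s(a,b)) := by
          apply mul_le_mul_of_nonneg_right _ (hc _ he₀H)
          exact_mod_cast hNcard
  have hcard' : (H \ N).card < H.card := Finset.card_lt_card (Finset.ssubset_iff_of_subset
      (Finset.sdiff_subset)|>.mpr ⟨s(a,b), he₀H, by simp [he₀N]⟩)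
  obtain ⟨D', hD'sub, hD'match, hD'cost⟩ := ih _ hcard' (H \ N)
    (fun e he => hc e (Finset.sdiff_subset he))
    (fun v => le_trans (Finset.card_le_card (Finset.filter_subset_filter _ Finset.sdiff_subset)) (hdeg v))
    rfl
  refine ⟨insert (s(a,b)) D', ?_, ?_, ?_⟩
  · exact Finset.insert_subset he₀H (hD'sub.trans Finset.sdiff_subset)
  · intro v
    by_cases hv : v ∈ s(a,b)
    · have hD'v : {e ∈ D' | v ∈ e} = ∅ := by
        rw [Finset.eq_empty_iff_forall_notMem]
        intro e he
        rw [mem_filter] at he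
        have heH := hD'sub he.1
        rw [Finset.mem_sdiff] at heH
        refine heH.2 ?_
        rw [hN, mem_filter]
        rcases Sym2.mem_iff.mp hv with rfl | rfl
        · exact ⟨heH.1, Or.inl he.2⟩
        · exact ⟨heH.1, Or.inr he.2⟩
      have : {e ∈ insert (s(a,b)) D' | v ∈ e} ⊆ insert (s(a,b)) ∅ := by
        intro e he
        rw [mem_filter, Finset.mem_insert] at he
        rcases he.1 with rfl | hmem
        · simp
        · exfalso; rw [Finset.eq_empty_iff_forall_notMem] at hD'v
          exact hD'v e (mem_filter.mpr ⟨hmem, he.2⟩)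
      calc ({e ∈ insert (s(a,b)) D' | v ∈ e}).card ≤ (insert (s(a,b)) (∅:Finset (Sym2 V))).card :=
            Finset.card_le_card this
        _ ≤ 1 := by simp
    · have : {e ∈ insert (s(a,b)) D' | v ∈ e} ⊆ {e ∈ D' | v ∈ e} := by
        intro e he
        rw [mem_filter] at *
        rcases Finset.mem_insert.mp he.1 with rfl | hmem
        · exact absurd he.2 hv
        · exact ⟨hmem, he.2⟩
      exact le_trans (Finset.card_le_card this) (hD'match v)
  · have he₀D' : s(a,b) ∉ D' := fun h => by
      have := hD'sub h; rw [Finset.mem_sdiff] at this; exact this.2 he₀N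
    rw [Finset.sum_insert he₀D']
    have hsplit : ∑ e ∈ H, c e = ∑ e ∈ N, c e + ∑ e ∈ H \ N, c e := by
      rw [← Finset.sum_sdiff hNsub]; ring
    have := hD'cost
    nlinarith [hc _ he₀H]

end Aux

/-- If `x` is a fractional edge cover of a graph `G` with nonnegative
edge costs `c`, then there exists an integral edge cover `C` of cost at most
`(4/3)·cᵀx`; i.e. the integrality gap of the fractional edge cover LP is at most `4/3`. -/
theorem edge_cover_integrality_gap {V : Type*} [Fintype V] [DecidableEq V]
    (G : SimpleGraph V) [DecidableRel G.Adj]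
    (c x : Sym2 V → ℝ) (hc : ∀ e, 0 ≤ c e) (hx : ∀ e, 0 ≤ x e)
    (hsupp : ∀ e ∉ G.edgeFinset, x e = 0)
    (hcover : ∀ u : V, 1 ≤ ∑ e ∈ G.incidenceFinset u, x e) :
    ∃ C ⊆ G.edgeFinset, (∀ u : V, ∃ e ∈ C, u ∈ e) ∧
      ∑ e ∈ C, c e ≤ (4 / 3) * ∑ e ∈ G.edgeFinset, c e * x e := by
  classical
  set S : Finset (Sym2 V) := G.edgeFinset with hS
  -- the polytope K
  set K : Set (Sym2 V → ℝ) := {y | (∀ e, 0 ≤ y e ∧ y e ≤ 1) ∧ (∀ e, e ∉ S → y e = 0) ∧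
      (∀ v : V, 1 ≤ ∑ e ∈ G.incidenceFinset v, y e)} with hK
  have hincid : ∀ v : V, G.incidenceFinset v = {e ∈ S | v ∈ e} := fun v =>
    G.incidenceFinset_eq_filter v
  -- capped initial point
  have hx0K : (fun e => min (x e) 1) ∈ K := by
    refine ⟨fun e => ⟨le_min (hx e) one_pos.le, min_le_right _ _⟩,
      fun e he => by simp [hsupp e he], fun v => ?_⟩
    by_cases hall : ∀ e ∈ G.incidenceFinset v, x e ≤ 1
    · calc (1:ℝ) ≤ ∑ e ∈ G.incidenceFinset v, x e := hcover v
        _ = ∑ e ∈ G.incidenceFinset v, min (x e) 1 :=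
          Finset.sum_congr rfl fun e he => (min_eq_left (hall e he)).symm
    · push_neg at hall
      obtain ⟨e₀, he₀, hgt⟩ := hall
      calc (1:ℝ) = min (x e₀) 1 := (min_eq_right hgt.le).symm
        _ ≤ ∑ e ∈ G.incidenceFinset v, min (x e) 1 :=
          Finset.single_le_sum (fun e _ => le_min (hx e) one_pos.le) he₀
  -- K is compact
  have hKclosed : IsClosed K := by
    rw [hK]
    have h1 : IsClosed {y : Sym2 V → ℝ | ∀ e, 0 ≤ y e ∧ y e ≤ 1} := by
      rw [Set.setOf_forall]
      exact isClosed_iInter fun e => (isClosed_le continuous_const (continuous_apply e)).inter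
        (isClosed_le (continuous_apply e) continuous_const)
    have h2 : IsClosed {y : Sym2 V → ℝ | ∀ e, e ∉ S → y e = 0} := by
      rw [Set.setOf_forall]
      refine isClosed_iInter fun e => ?_
      by_cases he : e ∈ S
      · simp [he]
      · simpa [he] using isClosed_eq (continuous_apply e) continuous_const
    have h3 : IsClosed {y : Sym2 V → ℝ | ∀ v : V, 1 ≤ ∑ e ∈ G.incidenceFinset v, y e} := by
      rw [Set.setOf_forall]
      exact isClosed_iInter fun v => isClosed_le continuous_const
        (continuous_finset_sum _ fun e _ => continuous_apply e)
    have : {y : Sym2 V → ℝ | (∀ e, 0 ≤ y e ∧ y e ≤ 1) ∧ (∀ e, e ∉ S → y e = 0) ∧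
        (∀ v : V, 1 ≤ ∑ e ∈ G.incidenceFinset v, y e)} =
        ({y : Sym2 V → ℝ | ∀ e, 0 ≤ y e ∧ y e ≤ 1} ∩ {y : Sym2 V → ℝ | ∀ e, e ∉ S → y e = 0}) ∩
        {y : Sym2 V → ℝ | ∀ v : V, 1 ≤ ∑ e ∈ G.incidenceFinset v, y e} := by
      ext y; simp [Set.mem_inter_iff, and_assoc]
    rw [this]
    exact (h1.inter h2).inter h3
  have hKcompact : IsCompact K := by
    refine IsCompact.of_isClosed_subset (isCompact_univ_pi
      (fun _ : Sym2 V => isCompact_Icc (a := (0:ℝ)) (b := 1))) hKclosed ?_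
    intro y hy
    rw [Set.mem_univ_pi]
    exact fun e => ⟨(hy.1 e).1, (hy.1 e).2⟩
  -- cost functional
  set φ : (Sym2 V → ℝ) → ℝ := fun y => ∑ e ∈ S, c e * y e with hφ
  have hφcont : Continuous φ := continuous_finset_sum _ fun e _ =>
    continuous_const.mul (continuous_apply e)
  obtain ⟨x1, hx1K, hx1min⟩ := hKcompact.exists_isMinOn ⟨_, hx0K⟩ hφcont.continuousOn
  -- among minimizers, maximize the squared norm
  set K' : Set (Sym2 V → ℝ) := K ∩ {y | φ y = φ x1} with hK'
  have hK'compact : IsCompact K' :=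
    IsCompact.of_isClosed_subset hKcompact
      (hKclosed.inter (isClosed_eq hφcont continuous_const)) Set.inter_subset_left
  set ψ : (Sym2 V → ℝ) → ℝ := fun y => ∑ e ∈ S, (y e)^2 with hψ
  have hψcont : Continuous ψ := continuous_finset_sum _ fun e _ => (continuous_apply e).pow 2
  obtain ⟨z, hzK', hzmax⟩ := hK'compact.exists_isMaxOn ⟨x1, hx1K, rfl⟩ hψcont.continuousOn
  obtain ⟨hzK, hzφ⟩ := hzK'
  -- notation: tightness
  set Tight : V → Prop := fun v => ∑ e ∈ G.incidenceFinset v, z e = 1 with hTight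
  -- fractional edges
  set F : Finset (Sym2 V) := {e ∈ S | 0 < z e ∧ z e < 1} with hF
  have hFS : F ⊆ S := Finset.filter_subset _ _
  -- the extremality property
  have hext : ∀ d : Sym2 V → ℝ, (∀ e, e ∉ F → d e = 0) →
      (∀ v : V, Tight v → ∑ e ∈ G.incidenceFinset v, d e = 0) → d = 0 := by
    intro d hdsupp hdtight
    by_contra hd0
    set pf : Sym2 V → ℝ := fun e => if d e = 0 then 1 else min (z e) (1 - z e) / |d e| with hpf
    set pv : V → ℝ := fun v => if (∑ e ∈ G.incidenceFinset v, d e) = 0 then 1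
      else (∑ e ∈ G.incidenceFinset v, z e - 1) / |∑ e ∈ G.incidenceFinset v, d e| with hpv
    set Acand : Finset ℝ :=
      insert 1 ((F.image pf) ∪ ((univ.filter (fun v => ¬ Tight v)).image pv)) with hA
    have hAne : Acand.Nonempty := ⟨1, by simp [hA]⟩
    set ε : ℝ := Acand.min' hAne with hε
    have hεpos : 0 < ε := by
      rw [hε, Finset.lt_min'_iff]
      intro a ha
      rw [hA] at ha
      rcases Finset.mem_insert.mp ha with rfl | ha
      · norm_num
      rcases Finset.mem_union.mp ha with ha | ha
      · obtain ⟨e, heF, rfl⟩ := Finset.mem_image.mp ha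
        rw [hF, Finset.mem_filter] at heF
        by_cases hde : d e = 0
        · simp [hpf, hde]
        · simp only [hpf, hde, if_false]
          exact div_pos (lt_min heF.2.1 (by linarith [heF.2.2])) (abs_pos.mpr hde)
      · obtain ⟨v, hv, rfl⟩ := Finset.mem_image.mp ha
        rw [Finset.mem_filter] at hv
        by_cases hdv : (∑ e ∈ G.incidenceFinset v, d e) = 0
        · simp [hpv, hdv]
        · simp only [hpv, hdv, if_false]
          refine div_pos ?_ (abs_pos.mpr hdv)
          exact sub_pos.mpr (lt_of_le_of_ne (hzK.2.2 v) (Ne.symm hv.2))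
    have hεF : ∀ e ∈ F, ε * |d e| ≤ min (z e) (1 - z e) := by
      intro e he
      have heF := he
      rw [hF, Finset.mem_filter] at heF
      by_cases hde : d e = 0
      · simp only [hde, abs_zero, mul_zero]
        exact le_min heF.2.1.le (by linarith [heF.2.2])
      · have h1 : ε ≤ pf e := Finset.min'_le _ _ (by
          rw [hA]
          exact Finset.mem_insert_of_mem (Finset.mem_union_left _
            (Finset.mem_image_of_mem pf he)))
        rw [hpf] at h1
        simp only [hde, if_false] at h1
        rwa [le_div_iff₀ (abs_pos.mpr hde)] at h1
    have hεv : ∀ v : V, ¬ Tight v →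
        ε * |∑ e ∈ G.incidenceFinset v, d e| ≤ (∑ e ∈ G.incidenceFinset v, z e) - 1 := by
      intro v hv
      by_cases hdv : (∑ e ∈ G.incidenceFinset v, d e) = 0
      · simp only [hdv, abs_zero, mul_zero]
        exact sub_nonneg.mpr (hzK.2.2 v)
      · have h1 : ε ≤ pv v := Finset.min'_le _ _ (by
          rw [hA]
          exact Finset.mem_insert_of_mem (Finset.mem_union_right _
            (Finset.mem_image_of_mem pv (Finset.mem_filter.mpr ⟨Finset.mem_univ v, hv⟩))))
        rw [hpv] at h1
        simp only [hdv, if_false] at h1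
        rwa [le_div_iff₀ (abs_pos.mpr hdv)] at h1
    have hmem : ∀ t : ℝ, |t| ≤ ε → (fun e => z e + t * d e) ∈ K := by
      intro t ht
      refine ⟨fun e => ?_, fun e he => ?_, fun v => ?_⟩
      · by_cases heF : e ∈ F
        · have hb := hεF e heF
          have h1 : |t * d e| ≤ min (z e) (1 - z e) := by
            rw [abs_mul]
            calc |t| * |d e| ≤ ε * |d e| := mul_le_mul_of_nonneg_right ht (abs_nonneg _)
              _ ≤ _ := hb
          have h2 := min_le_left (z e) (1 - z e)
          have h3 := min_le_right (z e) (1 - z e)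
          have h4 := neg_abs_le (t * d e)
          have h5 := le_abs_self (t * d e)
          constructor <;> simp only <;> linarith
        · have hd0' : d e = 0 := hdsupp e heF
          simp only [hd0', mul_zero, add_zero]
          exact hzK.1 e
      · have : d e = 0 := hdsupp e (fun hmem' => he (hFS hmem'))
        simp only [this, mul_zero, add_zero]
        exact hzK.2.1 e he
      · have hsum : ∑ e ∈ G.incidenceFinset v, (z e + t * d e)
            = (∑ e ∈ G.incidenceFinset v, z e) + t * ∑ e ∈ G.incidenceFinset v, d e := by
          rw [Finset.sum_add_distrib, Finset.mul_sum]
        rw [hsum]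
        by_cases htv : Tight v
        · rw [hdtight v htv]
          have : ∑ e ∈ G.incidenceFinset v, z e = 1 := htv
          simp [this]
        · have hb := hεv v htv
          have h1 : |t * ∑ e ∈ G.incidenceFinset v, d e| ≤
              (∑ e ∈ G.incidenceFinset v, z e) - 1 := by
            rw [abs_mul]
            calc |t| * _ ≤ ε * |∑ e ∈ G.incidenceFinset v, d e| :=
                mul_le_mul_of_nonneg_right ht (abs_nonneg _)
              _ ≤ _ := hb
          have h4 := neg_abs_le (t * ∑ e ∈ G.incidenceFinset v, d e)
          linarith
    -- linearity of the cost along d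
    set φd : ℝ := ∑ e ∈ S, c e * d e with hφd'
    have hφlin : ∀ t : ℝ, φ (fun e => z e + t * d e) = φ z + t * φd := by
      intro t
      simp only [hφ, hφd', Finset.mul_sum]
      rw [← Finset.sum_add_distrib]
      exact Finset.sum_congr rfl fun e _ => by ring
    by_cases hφd0 : φd = 0
    · -- use maximality of ψ
      have hψlin : ∀ t : ℝ, ψ (fun e => z e + t * d e)
          = ψ z + 2 * t * (∑ e ∈ S, z e * d e) + t^2 * (∑ e ∈ S, (d e)^2) := by
        intro t
        simp only [hψ, Finset.mul_sum]
        rw [← Finset.sum_add_distrib, ← Finset.sum_add_distrib]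
        exact Finset.sum_congr rfl fun e _ => by ring
      have hmemp : (fun e => z e + ε * d e) ∈ K' :=
        ⟨hmem ε (by rw [abs_of_pos hεpos]), by
          show φ (fun e => z e + ε * d e) = φ x1
          rw [hφlin ε, hφd0, mul_zero, add_zero]; exact hzφ⟩
      have hmemm : (fun e => z e + (-ε) * d e) ∈ K' :=
        ⟨hmem (-ε) (by rw [abs_neg, abs_of_pos hεpos]), by
          show φ (fun e => z e + (-ε) * d e) = φ x1
          rw [hφlin (-ε), hφd0, mul_zero, add_zero]; exact hzφ⟩
      have hp : ψ (fun e => z e + ε * d e) ≤ ψ z := hzmax hmemp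
      have hm : ψ (fun e => z e + (-ε) * d e) ≤ ψ z := hzmax hmemm
      rw [hψlin ε] at hp
      rw [hψlin (-ε)] at hm
      rw [neg_sq] at hm
      have hε2 : 0 < ε^2 := pow_pos hεpos 2
      have hsq : (∑ e ∈ S, (d e)^2) ≤ 0 := by
        by_contra hgt
        push_neg at hgt
        have := mul_pos hε2 hgt
        linarith
      have hsq0 : (∑ e ∈ S, (d e)^2) = 0 :=
        le_antisymm hsq (Finset.sum_nonneg fun e _ => sq_nonneg _)
      have hall : ∀ e ∈ S, (d e)^2 = 0 :=
        (Finset.sum_eq_zero_iff_of_nonneg fun e _ => sq_nonneg _).mp hsq0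
      apply hd0
      funext e
      by_cases heS : e ∈ S
      · exact pow_eq_zero_iff (n := 2) (by norm_num) |>.mp (hall e heS)
      · exact hdsupp e fun hmem' => heS (hFS hmem')
    · -- cost can be decreased: contradiction with minimality
      rcases lt_or_gt_of_ne hφd0 with hneg | hpos
      · have hy : φ x1 ≤ φ (fun e => z e + ε * d e) := hx1min (hmem ε (by rw [abs_of_pos hεpos]))
        rw [hφlin ε] at hy
        have hz1 : φ z = φ x1 := hzφ
        nlinarith
      · have hy : φ x1 ≤ φ (fun e => z e + (-ε) * d e) :=
          hx1min (hmem (-ε) (by rw [abs_neg, abs_of_pos hεpos]))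
        rw [hφlin (-ε)] at hy
        have hz1 : φ z = φ x1 := hzφ
        nlinarith
  -- values off F within S are 0 or 1
  have hval01 : ∀ e ∈ S, e ∉ F → z e = 0 ∨ z e = 1 := by
    intro e heS heF
    rw [hF, Finset.mem_filter] at heF
    push_neg at heF
    have hb := hzK.1 e
    rcases eq_or_lt_of_le hb.1 with h0 | h0
    · exact Or.inl h0.symm
    · exact Or.inr (le_antisymm hb.2 (heF heS h0))
  -- splitting incidence sums along F
  have hfilter_eq : ∀ v : V, (G.incidenceFinset v).filter (· ∈ F) = {e ∈ F | v ∈ e} := by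
    intro v
    ext e
    simp only [Finset.mem_filter, hincid v]
    constructor
    · rintro ⟨⟨_, hve⟩, heF⟩; exact ⟨heF, hve⟩
    · rintro ⟨heF, hve⟩; exact ⟨⟨hFS heF, hve⟩, heF⟩
  have hsplit : ∀ (v : V) (f : Sym2 V → ℝ), ∑ e ∈ G.incidenceFinset v, f e
      = ∑ e ∈ {e ∈ F | v ∈ e}, f e
        + ∑ e ∈ (G.incidenceFinset v).filter (¬ · ∈ F), f e := by
    intro v f
    rw [← Finset.sum_filter_add_sum_filter_not (G.incidenceFinset v) (· ∈ F) f, hfilter_eq v]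
  -- the non-fractional part of each incidence sum is a natural number
  have hnatsum : ∀ v : V, ∃ n : ℕ,
      ∑ e ∈ (G.incidenceFinset v).filter (¬ · ∈ F), z e = n := by
    intro v
    apply sum_zero_one_nat'
    intro e he
    rw [Finset.mem_filter] at he
    have heS : e ∈ S := by rw [hincid v, Finset.mem_filter] at he; exact he.1.1
    exact hval01 e heS he.2
  set degF : V → ℕ := fun v => ({e ∈ F | v ∈ e}).card with hdegF
  -- a tight vertex cannot have exactly one fractional edge
  have hdeg2 : ∀ v : V, Tight v → degF v ≠ 1 := by
    intro v hv hdeg1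
    obtain ⟨e₀, he₀⟩ := Finset.card_eq_one.mp hdeg1
    obtain ⟨n, hn⟩ := hnatsum v
    have htv : ∑ e ∈ G.incidenceFinset v, z e = 1 := hv
    rw [hsplit v z, he₀, Finset.sum_singleton, hn] at htv
    have he₀F : e₀ ∈ F := by
      have : e₀ ∈ ({e₀} : Finset (Sym2 V)) := Finset.mem_singleton_self e₀
      rw [← he₀, Finset.mem_filter] at this
      exact this.1
    rw [hF, Finset.mem_filter] at he₀F
    rcases Nat.eq_zero_or_pos n with h0 | h1
    · rw [h0] at htv; push_cast at htv
      have := he₀F.2.2; linarith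
    · have : (1:ℝ) ≤ n := by exact_mod_cast h1
      have := he₀F.2.1; linarith
  -- tight vertices incident to F
  set TF : Finset V := {v ∈ univ | Tight v ∧ 0 < degF v} with hTF
  have hcardle : F.card ≤ TF.card := by
    have hli : LinearIndependent ℝ
        (fun e : ↥F => (fun v : ↥TF => if (v:V) ∈ (e:Sym2 V) then (1:ℝ) else 0)) := by
      rw [Fintype.linearIndependent_iff]
      intro g hg i
      set d : Sym2 V → ℝ := fun e => if h : e ∈ F then g ⟨e, h⟩ else 0 with hd
      have hsum_eq : ∀ v : V, ∑ e ∈ G.incidenceFinset v, d e = ∑ e ∈ {e ∈ F | v ∈ e}, d e := by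
        intro v
        rw [hsplit v d]
        have hz0 : ∑ e ∈ (G.incidenceFinset v).filter (¬ · ∈ F), d e = 0 := by
          apply Finset.sum_eq_zero
          intro e he
          rw [Finset.mem_filter] at he
          exact dif_neg he.2
        rw [hz0, add_zero]
      have hdz : d = 0 := by
        apply hext
        · intro e he; simp [hd, he]
        · intro v hv
          rw [hsum_eq v]
          by_cases hvTF : v ∈ TF
          · have hgv := congrFun hg ⟨v, hvTF⟩
            simp only [Finset.sum_apply, Pi.smul_apply, smul_eq_mul, Pi.zero_apply] at hgv
            have h1 : ∀ i : ↥F, g i * (if (v:V) ∈ (i:Sym2 V) then (1:ℝ) else 0)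
                = (if (v:V) ∈ (i:Sym2 V) then d (i:Sym2 V) else 0) := by
              intro i
              by_cases hvi : (v:V) ∈ (i:Sym2 V)
              · simp [hvi, hd, i.2]
              · simp [hvi]
            rw [Finset.sum_congr rfl (fun i _ => h1 i)] at hgv
            rw [Finset.sum_filter,
              ← Finset.sum_coe_sort F (fun e => if (v:V) ∈ e then d e else 0)]
            exact hgv
          · have hdv0 : degF v = 0 := by
              by_contra hne
              exact hvTF (by rw [hTF, Finset.mem_filter]; exact ⟨Finset.mem_univ v, hv, Nat.pos_of_ne_zero hne⟩)
            simp only [hdegF] at hdv0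
            rw [Finset.card_eq_zero] at hdv0
            rw [hdv0, Finset.sum_empty]
      have := congrFun hdz (i : Sym2 V)
      simpa [hd, i.2] using this
    have h1 : Fintype.card ↥F ≤ Fintype.card ↥TF := by
      have h2 := hli.fintype_card_le_finrank
      rwa [Module.finrank_pi ℝ] at h2
    simpa using h1
  -- handshake: each edge of F has exactly two endpoints
  have hedge2 : ∀ e ∈ F, ({v ∈ (univ : Finset V) | v ∈ e}).card = 2 := by
    intro e heF
    have heS : e ∈ G.edgeSet := by
      have := hFS heF
      rwa [hS, SimpleGraph.mem_edgeFinset] at this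
    induction e using Sym2.ind with
    | _ a b =>
      have hab : a ≠ b := G.ne_of_adj ((SimpleGraph.mem_edgeSet G).mp heS)
      have hset : {v ∈ (univ : Finset V) | v ∈ s(a,b)} = {a, b} := by
        ext v
        simp [Sym2.mem_iff]
      rw [hset, Finset.card_insert_of_notMem (by simp [hab]), Finset.card_singleton]
  have hhand : ∑ v ∈ (univ : Finset V), degF v = 2 * F.card := by
    simp only [hdegF]
    calc ∑ v ∈ (univ : Finset V), ({e ∈ F | v ∈ e}).card
        = ∑ v ∈ (univ : Finset V), ∑ e ∈ F, (if v ∈ e then 1 else 0) := by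
          refine Finset.sum_congr rfl fun v _ => ?_
          rw [Finset.card_filter]
      _ = ∑ e ∈ F, ∑ v ∈ (univ : Finset V), (if v ∈ e then 1 else 0) := Finset.sum_comm
      _ = ∑ e ∈ F, ({v ∈ (univ : Finset V) | v ∈ e}).card := by
          refine Finset.sum_congr rfl fun e _ => ?_
          rw [Finset.card_filter]
      _ = ∑ _e ∈ F, 2 := Finset.sum_congr rfl hedge2
      _ = 2 * F.card := by rw [Finset.sum_const, smul_eq_mul, mul_comm]
  -- squeeze: every vertex touching F is tight with exactly two fractional edges
  have hTFdeg : ∀ v ∈ TF, 2 ≤ degF v := by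
    intro v hv
    rw [hTF, Finset.mem_filter] at hv
    have h1 := hdeg2 v hv.2.1
    have h2 := hv.2.2
    omega
  have hsumTF_ge : 2 * TF.card ≤ ∑ v ∈ TF, degF v := by
    calc 2 * TF.card = ∑ _v ∈ TF, 2 := by rw [Finset.sum_const, smul_eq_mul, mul_comm]
      _ ≤ ∑ v ∈ TF, degF v := Finset.sum_le_sum hTFdeg
  have hsumTF_le : ∑ v ∈ TF, degF v ≤ 2 * F.card := by
    rw [← hhand]
    exact Finset.sum_le_sum_of_subset (Finset.subset_univ TF)
  have hsumTF_eq : ∑ v ∈ TF, degF v = 2 * TF.card := by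
    have := hcardle
    omega
  have hdeg0 : ∀ v : V, v ∉ TF → degF v = 0 := by
    intro v hv
    have hsd : ∑ w ∈ univ \ TF, degF w = 0 := by
      have := Finset.sum_sdiff (Finset.subset_univ TF) (f := degF)
      omega
    exact (Finset.sum_eq_zero_iff.mp hsd) v (Finset.mem_sdiff.mpr ⟨Finset.mem_univ v, hv⟩)
  have hdegTF2 : ∀ v ∈ TF, degF v = 2 := by
    intro v hv
    by_contra hne
    have h3 : 2 < degF v := lt_of_le_of_ne (hTFdeg v hv) (Ne.symm hne)
    have h4 : ∑ _v ∈ TF, 2 < ∑ w ∈ TF, degF w :=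
      Finset.sum_lt_sum hTFdeg ⟨v, hv, h3⟩
    rw [Finset.sum_const, smul_eq_mul, mul_comm] at h4
    omega
  have hstruct : ∀ v : V, 0 < degF v → Tight v ∧ degF v = 2 := by
    intro v hv
    have hvTF : v ∈ TF := by
      by_contra hnot
      rw [hdeg0 v hnot] at hv
      omega
    have := hvTF
    rw [hTF, Finset.mem_filter] at this
    exact ⟨this.2.1, hdegTF2 v hvTF⟩
  -- all fractional values are 1/2
  have hhalf : ∀ e ∈ F, z e = 1/2 := by
    set d : Sym2 V → ℝ := fun e => if e ∈ F then z e - 1/2 else 0 with hd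
    have hdz : d = 0 := by
      apply hext
      · intro e he; simp [hd, he]
      · intro v hv
        have hz1 : ∑ e ∈ G.incidenceFinset v, d e = ∑ e ∈ {e ∈ F | v ∈ e}, (z e - 1/2) := by
          rw [hsplit v d]
          have hz0 : ∑ e ∈ (G.incidenceFinset v).filter (¬ · ∈ F), d e = 0 := by
            apply Finset.sum_eq_zero
            intro e he
            rw [Finset.mem_filter] at he
            exact if_neg he.2
          rw [hz0, add_zero]
          refine Finset.sum_congr rfl fun e he => ?_
          rw [Finset.mem_filter] at he
          exact if_pos he.1
        rw [hz1]
        rcases Nat.eq_zero_or_pos (degF v) with h0 | hpos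
        · have : ({e ∈ F | v ∈ e}) = ∅ := by
            apply Finset.card_eq_zero.mp
            simpa [hdegF] using h0
          rw [this, Finset.sum_empty]
        · obtain ⟨_, hdv2⟩ := hstruct v hpos
          have hdv2' : ({e ∈ F | v ∈ e}).card = 2 := by simpa [hdegF] using hdv2
          obtain ⟨e1, e2, hne, hset⟩ := Finset.card_eq_two.mp hdv2'
          obtain ⟨n, hn⟩ := hnatsum v
          have htv : ∑ e ∈ G.incidenceFinset v, z e = 1 := hv
          rw [hsplit v z, hn, hset, Finset.sum_insert (by simp [hne]),
            Finset.sum_singleton] at htv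
          have he1F : e1 ∈ F := by
            have : e1 ∈ ({e ∈ F | v ∈ e}) := by rw [hset]; simp
            exact (Finset.mem_filter.mp this).1
          have he2F : e2 ∈ F := by
            have : e2 ∈ ({e ∈ F | v ∈ e}) := by rw [hset]; simp
            exact (Finset.mem_filter.mp this).1
          rw [hF, Finset.mem_filter] at he1F he2F
          have hn0 : n = 0 := by
            by_contra hne0
            have : (1:ℝ) ≤ n := by exact_mod_cast Nat.pos_of_ne_zero hne0
            have := he1F.2.1
            have := he2F.2.1
            linarith
          rw [hn0] at htv
          push_cast at htv
          rw [hset, Finset.sum_insert (by simp [hne]), Finset.sum_singleton]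
          linarith
    intro e heF
    have := congrFun hdz e
    simp only [hd, if_pos heF, Pi.zero_apply] at this
    linarith
  -- edges with value 1
  set A1 : Finset (Sym2 V) := {e ∈ S | z e = 1} with hA1
  -- extract a heavy matching from F
  have hdegFle2 : ∀ v : V, ({e ∈ F | v ∈ e}).card ≤ 2 := by
    intro v
    rcases Nat.eq_zero_or_pos (degF v) with h0 | hp
    · have : ({e ∈ F | v ∈ e}).card = 0 := by simpa [hdegF] using h0
      omega
    · have : ({e ∈ F | v ∈ e}).card = 2 := by simpa [hdegF] using (hstruct v hp).2
      omega
  obtain ⟨D, hDF, hDmatch, hDcost⟩ := exists_heavy_matching' c F (fun e _ => hc e) hdegFle2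
  refine ⟨A1 ∪ (F \ D), ?_, ?_, ?_⟩
  · rw [hS]
    exact Finset.union_subset (Finset.filter_subset _ _) (Finset.sdiff_subset.trans hFS)
  · -- coverage
    intro u
    rcases Nat.eq_zero_or_pos (degF u) with h0 | hp
    · have h0' : ({e ∈ F | u ∈ e}).card = 0 := by simpa [hdegF] using h0
      have hnotF : ∀ e ∈ G.incidenceFinset u, e ∉ F := by
        intro e he heF
        rw [hincid u, Finset.mem_filter] at he
        have : ({e ∈ F | u ∈ e}).Nonempty := ⟨e, Finset.mem_filter.mpr ⟨heF, he.2⟩⟩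
        rw [← Finset.card_pos] at this
        omega
      have hex : ∃ e ∈ G.incidenceFinset u, z e = 1 := by
        by_contra hno
        push_neg at hno
        have hall0 : ∀ e ∈ G.incidenceFinset u, z e = 0 := by
          intro e he
          have heS : e ∈ S := by rw [hincid u, Finset.mem_filter] at he; exact he.1
          rcases hval01 e heS (hnotF e he) with h | h
          · exact h
          · exact absurd h (hno e he)
        have := hzK.2.2 u
        rw [Finset.sum_eq_zero hall0] at this
        linarith
      obtain ⟨e, he, hz1'⟩ := hex
      rw [hincid u, Finset.mem_filter] at he
      exact ⟨e, Finset.mem_union_left _ (Finset.mem_filter.mpr ⟨he.1, hz1'⟩), he.2⟩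
    · obtain ⟨_, hdv2⟩ := hstruct u hp
      have hdv2' : ({e ∈ F | u ∈ e}).card = 2 := by simpa [hdegF] using hdv2
      obtain ⟨e1, e2, hne, hset⟩ := Finset.card_eq_two.mp hdv2'
      have he1 : e1 ∈ F ∧ u ∈ e1 := by
        have : e1 ∈ ({e ∈ F | u ∈ e}) := by rw [hset]; simp
        exact Finset.mem_filter.mp this
      have he2 : e2 ∈ F ∧ u ∈ e2 := by
        have : e2 ∈ ({e ∈ F | u ∈ e}) := by rw [hset]; simp
        exact Finset.mem_filter.mp this
      have hnotboth : e1 ∉ D ∨ e2 ∉ D := by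
        by_contra hb
        push_neg at hb
        have hsub2 : ({e1, e2} : Finset (Sym2 V)) ⊆ {e ∈ D | u ∈ e} := by
          intro f hf
          rcases Finset.mem_insert.mp hf with rfl | hf
          · exact Finset.mem_filter.mpr ⟨hb.1, he1.2⟩
          · rw [Finset.mem_singleton] at hf
            subst hf
            exact Finset.mem_filter.mpr ⟨hb.2, he2.2⟩
        have hcard2 : ({e1, e2} : Finset (Sym2 V)).card = 2 := by
          rw [Finset.card_insert_of_notMem (by simp [hne]), Finset.card_singleton]
        have := Finset.card_le_card hsub2
        have := hDmatch u
        omega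
      rcases hnotboth with h | h
      · exact ⟨e1, Finset.mem_union_right _ (Finset.mem_sdiff.mpr ⟨he1.1, h⟩), he1.2⟩
      · exact ⟨e2, Finset.mem_union_right _ (Finset.mem_sdiff.mpr ⟨he2.1, h⟩), he2.2⟩
  · -- cost bound
    have hdisjAF : Disjoint A1 F := by
      rw [Finset.disjoint_left]
      intro e he1 he2
      rw [hA1, Finset.mem_filter] at he1
      have := hhalf e he2
      rw [he1.2] at this
      norm_num at this
    have hdisj : Disjoint A1 (F \ D) := hdisjAF.mono_right Finset.sdiff_subset
    rw [Finset.sum_union hdisj]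
    have hFD : ∑ e ∈ F \ D, c e = ∑ e ∈ F, c e - ∑ e ∈ D, c e := by
      rw [eq_sub_iff_add_eq, Finset.sum_sdiff hDF]
    have hA1z : ∑ e ∈ A1, c e = ∑ e ∈ A1, c e * z e := by
      refine Finset.sum_congr rfl fun e he => ?_
      rw [hA1, Finset.mem_filter] at he
      rw [he.2, mul_one]
    have hFz : ∑ e ∈ F, c e * z e = (1/2) * ∑ e ∈ F, c e := by
      rw [Finset.mul_sum]
      refine Finset.sum_congr rfl fun e he => ?_
      rw [hhalf e he]
      ring
    have hA1nonneg : 0 ≤ ∑ e ∈ A1, c e * z e :=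
      Finset.sum_nonneg fun e _ => mul_nonneg (hc e) (hzK.1 e).1
    have hsumin : ∑ e ∈ A1, c e * z e + ∑ e ∈ F, c e * z e ≤ φ z := by
      rw [← Finset.sum_union hdisjAF]
      apply Finset.sum_le_sum_of_subset_of_nonneg
      · rw [hA1]
        exact Finset.union_subset (Finset.filter_subset _ _) hFS
      · intro e _ _
        exact mul_nonneg (hc e) (hzK.1 e).1
    have hφzx : φ z ≤ ∑ e ∈ S, c e * x e := by
      have h2 : φ z = φ x1 := hzφ
      have h3 : φ x1 ≤ φ (fun e => min (x e) 1) := hx1min hx0K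
      have h4 : φ (fun e => min (x e) 1) ≤ ∑ e ∈ S, c e * x e := by
        apply Finset.sum_le_sum
        intro e _
        exact mul_le_mul_of_nonneg_left (min_le_left _ _) (hc e)
      linarith
    calc ∑ e ∈ A1, c e + ∑ e ∈ F \ D, c e
        = ∑ e ∈ A1, c e + (∑ e ∈ F, c e - ∑ e ∈ D, c e) := by rw [hFD]
      _ ≤ ∑ e ∈ A1, c e + (2/3) * ∑ e ∈ F, c e := by linarith [hDcost]
      _ = ∑ e ∈ A1, c e * z e + (4/3) * ∑ e ∈ F, c e * z e := by rw [← hA1z, hFz]; ring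
      _ ≤ (4/3) * (∑ e ∈ A1, c e * z e + ∑ e ∈ F, c e * z e) := by linarith
      _ ≤ (4/3) * φ z := by linarith
      _ ≤ (4/3) * ∑ e ∈ S, c e * x e := by linarith
end

section
/- Let (T, z) be a tree with fractional solution satisfying thin coverage z(cov(e)) ≤ 2/ε for every edge e, costs in [1, M], and suppose T has no (4M/ε²)-thin edge with respect to z. Then (T, z) is (48M/ε²)-simple: there exists a node u whose removal splits T into trees K₁,…,K_t such that each K_j has at most 48M/ε² leaves and the total fractional cost of links internal to K_j is at most 48M/ε². -/
open SimpleGraph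
open scoped Classical

/-- `cov(e)`: the links whose tree path contains the edge `e`. -/
noncomputable def covE {V : Type*} (G : SimpleGraph V) (hG : G.IsTree) (e : Sym2 V) :
    Set (V × V) := {ℓ | e ∈ (tpath G hG ℓ.1 ℓ.2).edges}

/-- The vertex set of the component of `u` after deleting the edge `{u,v}`. -/
def sideOf {V : Type*} (G : SimpleGraph V) (u v : V) : Set V :=
  {w | (G.deleteEdges {s(u, v)}).Reachable u w}

/-- An edge `{p,q}` of the tree is `α`-thin w.r.t. `z`: on each of the two components of
`T − e`, the total fractional cost of links with both endpoints in that component is at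
least `α`. -/
noncomputable def ThinEdge {V : Type*} [Fintype V] (G : SimpleGraph V)
    (L : Finset (V × V)) (c z : V × V → ℝ) (α : ℝ) (p q : V) : Prop :=
  (α ≤ ∑ ℓ ∈ L.filter (fun ℓ => ℓ.1 ∈ sideOf G p q ∧ ℓ.2 ∈ sideOf G p q), c ℓ * z ℓ) ∧
  (α ≤ ∑ ℓ ∈ L.filter (fun ℓ => ℓ.1 ∈ sideOf G q p ∧ ℓ.2 ∈ sideOf G q p), c ℓ * z ℓ)

/-- `K` is (the vertex set of) a connected component of `T − u`. -/
def IsCompAt {V : Type*} (G : SimpleGraph V) (u : V) (K : Set V) : Prop :=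
  ∃ w, w ≠ u ∧ K = {x | (G.deleteEdges {e | u ∈ e}).Reachable w x}

/-- The number of leaves of the subtree induced on `K`: vertices of `K` with exactly one
neighbour inside `K`. -/
noncomputable def leafCount {V : Type*} [Fintype V] (G : SimpleGraph V) (K : Set V) : ℕ :=
  (Finset.univ.filter (fun x => x ∈ K ∧
    (Finset.univ.filter (fun y => y ∈ K ∧ G.Adj x y)).card = 1)).card


section Helpers

variable {V : Type*} {G : SimpleGraph V}

private lemma walk_eq_of_isPath (hG : G.IsTree) {a b : V} {p q : G.Walk a b}
    (hp : p.IsPath) (hq : q.IsPath) : p = q :=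
  (hG.existsUnique_path a b).unique hp hq

private lemma eq_of_walk_to_center {a : V} :
    ∀ {x y : V} (_ : (G.deleteEdges {e : Sym2 V | a ∈ e}).Walk x y), y = a → x = a := by
  intro x y p
  induction p with
  | nil => exact id
  | @cons s m t h q ih =>
    intro hy
    have hm := ih hy
    subst hm
    rcases SimpleGraph.deleteEdges_adj.mp h with ⟨-, hne⟩
    exact absurd (by simp) hne

/-- Reachability in the graph minus all edges at `a` is not affected from outside. -/
private lemma not_reach_center {a w : V} (hw : w ≠ a) :
    ¬ (G.deleteEdges {e : Sym2 V | a ∈ e}).Reachable w a := by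
  intro ⟨p⟩
  exact hw (eq_of_walk_to_center p rfl)

/-- A walk avoiding the vertex `a` gives reachability in the graph minus all edges at `a`. -/
private lemma reach_deleteAll_of_avoid {a x y : V} (p : G.Walk x y) (ha : a ∉ p.support) :
    (G.deleteEdges {e : Sym2 V | a ∈ e}).Reachable x y := by
  refine ⟨p.toDeleteEdges _ fun e he hmem => ?_⟩
  induction e with
  | h e1 e2 =>
    rcases (Sym2.mem_iff).mp hmem with rfl | rfl
    · exact ha (p.fst_mem_support_of_mem_edges he)
    · exact ha (p.snd_mem_support_of_mem_edges he)

/-- In a tree, a path that avoids the edge `s(b,a)` and starts at `b` avoids `a` entirely. -/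
private lemma reach_avoid (hG : G.IsTree) {a b x : V} (hab : G.Adj a b)
    (h : (G.deleteEdges {s(b, a)}).Reachable b x) :
    ∃ p : G.Walk b x, p.IsPath ∧ a ∉ p.support := by
  classical
  obtain ⟨w⟩ := h
  set H := G.deleteEdges {s(b, a)} with hH
  have hple : H ≤ G := G.deleteEdges_le _
  set p : H.Walk b x := w.bypass with hpdef
  have hp : p.IsPath := w.bypass_isPath
  have hsub : ∀ e ∈ p.edges, e ∈ G.edgeSet := fun e he =>
    (SimpleGraph.edgeSet_subset_edgeSet.mpr hple) (p.edges_subset_edgeSet he)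
  refine ⟨p.transfer G hsub, hp.transfer hsub, fun ha => ?_⟩
  rw [SimpleGraph.Walk.support_transfer] at ha
  -- take the initial segment up to `a`
  set r : H.Walk b a := p.takeUntil a ha with hrdef
  have hr : r.IsPath := hp.takeUntil ha
  have hsub' : ∀ e ∈ r.edges, e ∈ G.edgeSet := fun e he =>
    hsub e (p.edges_takeUntil_subset ha he)
  have hredges : s(b, a) ∉ r.edges := by
    intro hmem
    have : s(b, a) ∈ H.edgeSet := r.edges_subset_edgeSet hmem
    rw [hH, SimpleGraph.edgeSet_deleteEdges] at this
    exact this.2 rfl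
  have h1 : (r.transfer G hsub') = SimpleGraph.Walk.cons hab.symm SimpleGraph.Walk.nil :=
    walk_eq_of_isPath hG (hr.transfer hsub') (by simp [SimpleGraph.Walk.cons_isPath_iff, hab.ne'])
  have : s(b, a) ∈ (r.transfer G hsub').edges := by rw [h1]; simp
  rw [SimpleGraph.Walk.edges_transfer] at this
  exact hredges this

/-- The single-edge-deleted side equals the all-edges-at-`a`-deleted component. -/
private lemma sideOf_eq (hG : G.IsTree) {a b : V} (hab : G.Adj a b) :
    sideOf G b a = {x | (G.deleteEdges {e : Sym2 V | a ∈ e}).Reachable b x} := by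
  ext x
  constructor
  · intro hx
    obtain ⟨p, _, hap⟩ := reach_avoid hG hab hx
    exact reach_deleteAll_of_avoid p hap
  · intro hx
    exact hx.mono (G.deleteEdges_anti (by simp))

private lemma notMem_sideOf (hG : G.IsTree) {a b : V} (hab : G.Adj a b) :
    a ∉ sideOf G b a := by
  rw [sideOf_eq hG hab]
  exact not_reach_center hab.ne'

private lemma mem_sideOf_self {a b : V} : b ∈ sideOf G b a := Set.mem_setOf.mpr (.refl b)

end Helpers

private lemma tpath_isPath_s8 {V : Type*} (G : SimpleGraph V) (hG : G.IsTree) (a b : V) :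
    (tpath G hG a b).IsPath :=
  (hG.existsUnique_path a b).choose_spec.1

section Helpers2

variable {V : Type*} {G : SimpleGraph V}

/-- Membership in the component of `v` after deleting all edges at `u` is closed under
adjacency steps avoiding `u`. -/
private lemma mem_comp_of_adj {u v x y : V} (hvu : v ≠ u)
    (hx : (G.deleteEdges {e : Sym2 V | u ∈ e}).Reachable v x) (hxy : G.Adj x y)
    (hy : y ≠ u) : (G.deleteEdges {e : Sym2 V | u ∈ e}).Reachable v y := by
  have hxu : x ≠ u := fun hxu => not_reach_center hvu (hxu ▸ hx)
  refine hx.trans ⟨SimpleGraph.Walk.cons ?_ SimpleGraph.Walk.nil⟩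
  rw [SimpleGraph.deleteEdges_adj]
  refine ⟨hxy, fun hmem => ?_⟩
  rcases Sym2.mem_iff.mp hmem with h | h
  · exact hxu h.symm
  · exact hy h.symm

/-- `v` is the unique neighbour of `u` inside the component of `v` in `T - u`. -/
private lemma uniq_nbr (hG : G.IsTree) {u v x : V} (huv : G.Adj u v)
    (hx : (G.deleteEdges {e : Sym2 V | u ∈ e}).Reachable v x) (hux : G.Adj u x) : x = v := by
  classical
  obtain ⟨w⟩ := hx
  set H := G.deleteEdges {e : Sym2 V | u ∈ e} with hH
  set p : H.Walk v x := w.bypass with hpdef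
  have hp : p.IsPath := w.bypass_isPath
  have hup : u ∉ p.support := fun hu => not_reach_center huv.ne' ⟨p.takeUntil u hu⟩
  have hple : H ≤ G := G.deleteEdges_le _
  have hsub : ∀ e ∈ p.edges, e ∈ G.edgeSet := fun e he =>
    (SimpleGraph.edgeSet_subset_edgeSet.mpr hple) (p.edges_subset_edgeSet he)
  set p' : G.Walk v x := p.transfer G hsub with hp'def
  have hp' : p'.IsPath := hp.transfer hsub
  have hup' : u ∉ p'.support := by
    rw [hp'def, SimpleGraph.Walk.support_transfer]; exact hup
  set q : G.Walk v u := p'.concat hux.symm with hqdef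
  have hqpath : q.IsPath := by
    rw [← SimpleGraph.Walk.isPath_reverse_iff, hqdef, SimpleGraph.Walk.reverse_concat,
      SimpleGraph.Walk.cons_isPath_iff]
    refine ⟨(SimpleGraph.Walk.isPath_reverse_iff _).mpr hp', ?_⟩
    rw [SimpleGraph.Walk.support_reverse, List.mem_reverse]
    exact hup'
  have hq2 : q = SimpleGraph.Walk.cons huv.symm SimpleGraph.Walk.nil :=
    walk_eq_of_isPath hG hqpath (by simp [SimpleGraph.Walk.cons_isPath_iff, huv.ne'])
  have hxq : x ∈ q.support := by
    rw [hqdef, SimpleGraph.Walk.support_concat]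
    simp only [List.concat_eq_append, List.mem_append, List.mem_singleton]
    exact Or.inl p'.end_mem_support
  rw [hq2] at hxq
  simp only [SimpleGraph.Walk.support_cons, SimpleGraph.Walk.support_nil, List.mem_cons,
    List.mem_singleton, List.not_mem_nil, or_false] at hxq
  rcases hxq with h1 | h1
  · exact h1
  · exact absurd h1.symm hux.ne

/-- Any walk from inside the component of `v` (in `T − u`) to outside it must use the
edge `s(u,v)`. -/
private lemma cross_edge (hG : G.IsTree) {u v : V} (huv : G.Adj u v) :
    ∀ {s t : V} (p : G.Walk s t),
      (G.deleteEdges {e : Sym2 V | u ∈ e}).Reachable v s →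
      ¬ (G.deleteEdges {e : Sym2 V | u ∈ e}).Reachable v t →
      s(u, v) ∈ p.edges := by
  intro s t p
  induction p with
  | nil => intro hs ht; exact absurd hs ht
  | @cons s m t h q ih =>
    intro hs ht
    by_cases hm : (G.deleteEdges {e : Sym2 V | u ∈ e}).Reachable v m
    · exact List.mem_cons.mpr (Or.inr (ih hm ht))
    · have hmu : m = u := by
        by_contra hmu
        exact hm (mem_comp_of_adj huv.ne' hs h hmu)
      subst hmu
      have hsv : s = v := uniq_nbr hG huv hs h.symm
      subst hsv
      exact List.mem_cons.mpr (Or.inl (Sym2.eq_swap))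

/-- An interior vertex of a path has two distinct neighbours along the path. -/
private lemma internal_two {x : V} :
    ∀ {a b : V} (p : G.Walk a b), p.IsPath → x ∈ p.support → x ≠ a → x ≠ b →
      ∃ n₁ n₂ : V, n₁ ≠ n₂ ∧ s(x, n₁) ∈ p.edges ∧ s(x, n₂) ∈ p.edges := by
  intro a b p
  induction p with
  | nil =>
    intro _ hx hxa _
    simp only [SimpleGraph.Walk.support_nil, List.mem_singleton] at hx
    exact absurd hx hxa
  | @cons a m b h q ih =>
    intro hp hx hxa hxb
    rw [SimpleGraph.Walk.cons_isPath_iff] at hp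
    obtain ⟨hq, haq⟩ := hp
    have hxq : x ∈ q.support := by
      simp only [SimpleGraph.Walk.support_cons, List.mem_cons] at hx
      rcases hx with h' | h'
      · exact absurd h' hxa
      · exact h'
    by_cases hxm : x = m
    · subst hxm
      cases q with
      | nil => exact absurd rfl hxb
      | @cons x m₂ b h₂ r =>
        refine ⟨a, m₂, ?_, ?_, ?_⟩
        · intro ham
          apply haq
          rw [ham]
          simp [SimpleGraph.Walk.support_cons, r.start_mem_support]
        · exact List.mem_cons.mpr (Or.inl (Sym2.eq_swap))
        · exact List.mem_cons.mpr (Or.inr (List.mem_cons.mpr (Or.inl rfl)))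
    · obtain ⟨n₁, n₂, hne, he₁, he₂⟩ := ih hq hxq hxm hxb
      exact ⟨n₁, n₂, hne, List.mem_cons.mpr (Or.inr he₁), List.mem_cons.mpr (Or.inr he₂)⟩

end Helpers2

/-- Existence of a center all of whose sides are cheap, by infinite descent. -/
private lemma exists_center {V : Type*} [Fintype V] (G : SimpleGraph V) (hG : G.IsTree)
    (L : Finset (V × V)) (c z : V × V → ℝ) (α : ℝ)
    (hnothin : ∀ p q : V, G.Adj p q → ¬ ThinEdge G L c z α p q) :
    ∃ u : V, ∀ v : V, G.Adj u v →
      (∑ ℓ ∈ L.filter (fun ℓ => ℓ.1 ∈ sideOf G v u ∧ ℓ.2 ∈ sideOf G v u), c ℓ * z ℓ) < α := by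
  classical
  by_contra hcon
  push_neg at hcon
  have claim : ∀ n : ℕ, ∀ a b : V, G.Adj a b →
      α ≤ (∑ ℓ ∈ L.filter (fun ℓ => ℓ.1 ∈ sideOf G b a ∧ ℓ.2 ∈ sideOf G b a), c ℓ * z ℓ) →
      (sideOf G b a).ncard ≤ n → False := by
    intro n
    induction n with
    | zero =>
      intro a b _ _ hcard
      have hpos : 0 < (sideOf G b a).ncard :=
        (Set.ncard_pos (Set.toFinite _)).mpr ⟨b, mem_sideOf_self⟩
      omega
    | succ n ihn =>
      intro a b hab hcost hcard
      obtain ⟨c', hc', hcost'⟩ := hcon b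
      by_cases hca : c' = a
      · rw [hca] at hcost'
        exact hnothin a b hab ⟨hcost', hcost⟩
      · have hsubset : sideOf G c' b ⊆ sideOf G b a := by
          intro x hx
          rw [sideOf_eq hG hc'] at hx
          have hedge : (G.deleteEdges {s(b, a)}).Adj b c' := by
            rw [SimpleGraph.deleteEdges_adj]
            refine ⟨hc', fun hmem => ?_⟩
            rw [Set.mem_singleton_iff, Sym2.congr_right] at hmem
            exact hca hmem
          exact (SimpleGraph.Adj.reachable hedge).trans
            (hx.mono (G.deleteEdges_anti (by simp)))
        have hss : sideOf G c' b ⊂ sideOf G b a :=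
          (Set.ssubset_iff_of_subset hsubset).mpr
            ⟨b, mem_sideOf_self, notMem_sideOf hG hc'⟩
        have hlt : (sideOf G c' b).ncard < (sideOf G b a).ncard :=
          Set.ncard_lt_ncard hss (Set.toFinite _)
        exact ihn b c' hc' hcost' (by omega)
  obtain ⟨u₀⟩ := hG.isConnected.nonempty
  obtain ⟨v₀, h1, h2⟩ := hcon u₀
  exact claim (sideOf G v₀ u₀).ncard u₀ v₀ h1 h2 le_rfl

/-- If `(T, z)` satisfies thin coverage (`z(cov(e)) ≤ 2/ε` for every
edge), costs lie in `[1, M]`, and `T` has no `(4M/ε²)`-thin edge w.r.t. `z`, then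
`(T, z)` is `(48M/ε²)`-simple: there is a node `u` whose removal splits `T` into trees
each having at most `48M/ε²` leaves and internal fractional cost at most `48M/ε²`. -/
theorem no_thin_edge_implies_simple {V : Type*} [Fintype V] [DecidableEq V]
    (G : SimpleGraph V) (hG : G.IsTree) (L : Finset (V × V)) (c z : V × V → ℝ)
    (ε M : ℝ) (hε : 0 < ε) (hε1 : ε ≤ 1) (hM : 1 ≤ M)
    (hc : ∀ ℓ ∈ L, 1 ≤ c ℓ ∧ c ℓ ≤ M) (hz0 : ∀ ℓ, 0 ≤ z ℓ)
    (hfeas : ∀ e ∈ G.edgeSet, 1 ≤ ∑ ℓ ∈ L.filter (· ∈ covE G hG e), z ℓ)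
    (hthincov : ∀ e ∈ G.edgeSet, ∑ ℓ ∈ L.filter (· ∈ covE G hG e), z ℓ ≤ 2 / ε)
    (hnothin : ∀ p q : V, G.Adj p q → ¬ ThinEdge G L c z (4 * M / ε ^ 2) p q) :
    ∃ u : V, ∀ K : Set V, IsCompAt G u K →
      (leafCount G K : ℝ) ≤ 48 * M / ε ^ 2 ∧
      ∑ ℓ ∈ L.filter (fun ℓ => ℓ.1 ∈ K ∧ ℓ.2 ∈ K), c ℓ * z ℓ ≤ 48 * M / ε ^ 2 := by
  classical
  obtain ⟨u, hu⟩ := exists_center G hG L c z (4 * M / ε ^ 2) hnothin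
  -- numeric facts
  have hε2 : (0 : ℝ) < ε ^ 2 := by positivity
  have hM0 : (0 : ℝ) ≤ M := by linarith
  have h6 : 6 / ε ≤ 36 * M / ε ^ 2 := by
    rw [div_le_div_iff₀ hε hε2]
    nlinarith [mul_nonneg hε.le (by nlinarith : (0 : ℝ) ≤ 6 * M - ε)]
  have hαle : 4 * M / ε ^ 2 ≤ 48 * M / ε ^ 2 := by
    rw [div_le_div_iff₀ hε2 hε2]
    nlinarith
  refine ⟨u, fun K hK => ?_⟩
  obtain ⟨w, hw, hKdef⟩ := hK
  obtain ⟨p, hp⟩ : ∃ p : G.Walk u w, p.IsPath := ⟨tpath G hG u w, tpath_isPath_s8 G hG u w⟩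
  cases p with
  | nil => exact absurd rfl hw
  | @cons u v w h q =>
    rw [SimpleGraph.Walk.cons_isPath_iff] at hp
    obtain ⟨hq, husup⟩ := hp
    have hreach_vw : (G.deleteEdges {e : Sym2 V | u ∈ e}).Reachable v w :=
      reach_deleteAll_of_avoid q husup
    have hKv : K = {x | (G.deleteEdges {e : Sym2 V | u ∈ e}).Reachable v x} := by
      rw [hKdef]
      ext x
      exact ⟨fun hx => hreach_vw.trans hx, fun hx => hreach_vw.symm.trans hx⟩
    have hKside : K = sideOf G v u := by rw [hKv, sideOf_eq hG h]
    have hcost : (∑ ℓ ∈ L.filter (fun ℓ => ℓ.1 ∈ K ∧ ℓ.2 ∈ K), c ℓ * z ℓ)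
        < 4 * M / ε ^ 2 := by
      rw [hKside]; exact hu v h
    refine ⟨?_, le_trans hcost.le hαle⟩
    -- the leaf bound
    set F : Finset V := Finset.univ.filter (fun x => x ∈ K ∧
      (Finset.univ.filter (fun y => y ∈ K ∧ G.Adj x y)).card = 1) with hF
    have hleafF : leafCount G K = F.card := rfl
    -- choose, for each leaf, its unique neighbour in K
    have hYall : ∀ x : V, ∃ y : V, x ∈ F →
        Finset.univ.filter (fun y => y ∈ K ∧ G.Adj x y) = {y} := by
      intro x
      by_cases hx : x ∈ F
      · obtain ⟨-, -, hcard⟩ := Finset.mem_filter.mp hx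
        obtain ⟨y, hy⟩ := Finset.card_eq_one.mp hcard
        exact ⟨y, fun _ => hy⟩
      · exact ⟨x, fun hmem => absurd hmem hx⟩
    choose Y hY using hYall
    have hYprop : ∀ x ∈ F, Y x ∈ K ∧ G.Adj x (Y x) := by
      intro x hx
      have := hY x hx
      have hmem : Y x ∈ Finset.univ.filter (fun y => y ∈ K ∧ G.Adj x y) := by
        rw [this]; exact Finset.mem_singleton_self _
      exact (Finset.mem_filter.mp hmem).2
    -- counting: for each link, at most 3 leaf edges on its path
    have hn3 : ∀ ℓ : V × V,
        (F.filter (fun x => ℓ ∈ covE G hG s(x, Y x))).card ≤ 3 := by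
      intro ℓ
      have hsubset : F.filter (fun x => ℓ ∈ covE G hG s(x, Y x)) ⊆ {ℓ.1, ℓ.2, v} := by
        intro x hx
        rw [Finset.mem_filter] at hx
        obtain ⟨hxF, hcov⟩ := hx
        have hcov' : s(x, Y x) ∈ (tpath G hG ℓ.1 ℓ.2).edges := hcov
        have hP : (tpath G hG ℓ.1 ℓ.2).IsPath := tpath_isPath_s8 G hG ℓ.1 ℓ.2
        have hxsup : x ∈ (tpath G hG ℓ.1 ℓ.2).support :=
          (tpath G hG ℓ.1 ℓ.2).fst_mem_support_of_mem_edges hcov'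
        simp only [Finset.mem_insert, Finset.mem_singleton]
        by_cases h1 : x = ℓ.1
        · exact Or.inl h1
        by_cases h2 : x = ℓ.2
        · exact Or.inr (Or.inl h2)
        obtain ⟨n₁, n₂, hne, he₁, he₂⟩ := internal_two (tpath G hG ℓ.1 ℓ.2) hP hxsup h1 h2
        have hadj₁ : G.Adj x n₁ :=
          (SimpleGraph.mem_edgeSet _).mp ((tpath G hG ℓ.1 ℓ.2).edges_subset_edgeSet he₁)
        have hadj₂ : G.Adj x n₂ :=
          (SimpleGraph.mem_edgeSet _).mp ((tpath G hG ℓ.1 ℓ.2).edges_subset_edgeSet he₂)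
        obtain ⟨hxK, hxcard⟩ := (Finset.mem_filter.mp hxF).2
        have hxreach : (G.deleteEdges {e : Sym2 V | u ∈ e}).Reachable v x := by
          rw [hKv] at hxK; exact hxK
        have hkey : ∀ nn : V, G.Adj x nn → nn ≠ u → nn ∈ K := by
          intro nn hadj hnu
          rw [hKv]
          exact mem_comp_of_adj h.ne' hxreach hadj hnu
        by_cases hu₁ : n₁ = u
        · subst hu₁
          exact Or.inr (Or.inr (uniq_nbr hG h hxreach hadj₁.symm))
        by_cases hu₂ : n₂ = u
        · subst hu₂
          exact Or.inr (Or.inr (uniq_nbr hG h hxreach hadj₂.symm))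
        exfalso
        have hn₁ : n₁ ∈ Finset.univ.filter (fun y => y ∈ K ∧ G.Adj x y) :=
          Finset.mem_filter.mpr ⟨Finset.mem_univ _, hkey n₁ hadj₁ hu₁, hadj₁⟩
        have hn₂ : n₂ ∈ Finset.univ.filter (fun y => y ∈ K ∧ G.Adj x y) :=
          Finset.mem_filter.mpr ⟨Finset.mem_univ _, hkey n₂ hadj₂ hu₂, hadj₂⟩
        rw [hY x hxF, Finset.mem_singleton] at hn₁ hn₂
        exact hne (hn₁.trans hn₂.symm)
      calc (F.filter (fun x => ℓ ∈ covE G hG s(x, Y x))).card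
          ≤ ({ℓ.1, ℓ.2, v} : Finset V).card := Finset.card_le_card hsubset
        _ ≤ 3 := by
            apply le_trans (Finset.card_insert_le _ _)
            apply Nat.succ_le_succ
            apply le_trans (Finset.card_insert_le _ _)
            simp
    -- crossing links cover the edge s(u,v)
    have hcross : ∀ ℓ : V × V, ¬(ℓ.1 ∈ K ∧ ℓ.2 ∈ K) →
        0 < (F.filter (fun x => ℓ ∈ covE G hG s(x, Y x))).card →
        ℓ ∈ covE G hG s(u, v) := by
      intro ℓ hPin hpos
      obtain ⟨x, hx⟩ := Finset.card_pos.mp hpos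
      rw [Finset.mem_filter] at hx
      obtain ⟨hxF, hcov⟩ := hx
      have hcov' : s(x, Y x) ∈ (tpath G hG ℓ.1 ℓ.2).edges := hcov
      have hxsup : x ∈ (tpath G hG ℓ.1 ℓ.2).support :=
        (tpath G hG ℓ.1 ℓ.2).fst_mem_support_of_mem_edges hcov'
      have hxK : x ∈ K := ((Finset.mem_filter.mp hxF).2).1
      have hxreach : (G.deleteEdges {e : Sym2 V | u ∈ e}).Reachable v x := by
        rw [hKv] at hxK; exact hxK
      show s(u, v) ∈ (tpath G hG ℓ.1 ℓ.2).edges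
      by_cases h1 : ℓ.1 ∈ K
      · have h2 : ℓ.2 ∉ K := fun h2 => hPin ⟨h1, h2⟩
        have h1' : (G.deleteEdges {e : Sym2 V | u ∈ e}).Reachable v ℓ.1 := by
          rw [hKv] at h1; exact h1
        have h2' : ¬ (G.deleteEdges {e : Sym2 V | u ∈ e}).Reachable v ℓ.2 := by
          rw [hKv] at h2; exact h2
        exact cross_edge hG h (tpath G hG ℓ.1 ℓ.2) h1' h2'
      · have h1' : ¬ (G.deleteEdges {e : Sym2 V | u ∈ e}).Reachable v ℓ.1 := by
          rw [hKv] at h1; exact h1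
        have hQ : s(u, v) ∈ ((tpath G hG ℓ.1 ℓ.2).takeUntil x hxsup).reverse.edges :=
          cross_edge hG h _ hxreach h1'
        rw [SimpleGraph.Walk.edges_reverse, List.mem_reverse] at hQ
        exact (tpath G hG ℓ.1 ℓ.2).edges_takeUntil_subset hxsup hQ
    -- main counting chain
    have step1 : (F.card : ℝ) ≤
        ∑ x ∈ F, ∑ ℓ ∈ L.filter (· ∈ covE G hG s(x, Y x)), z ℓ := by
      have : (F.card : ℝ) = ∑ _x ∈ F, (1 : ℝ) := by simp
      rw [this]
      refine Finset.sum_le_sum fun x hx => ?_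
      exact hfeas _ ((SimpleGraph.mem_edgeSet _).mpr (hYprop x hx).2)
    have step2 : (∑ x ∈ F, ∑ ℓ ∈ L.filter (· ∈ covE G hG s(x, Y x)), z ℓ)
        = ∑ ℓ ∈ L, ((F.filter (fun x => ℓ ∈ covE G hG s(x, Y x))).card : ℝ) * z ℓ := by
      calc ∑ x ∈ F, ∑ ℓ ∈ L.filter (· ∈ covE G hG s(x, Y x)), z ℓ
          = ∑ x ∈ F, ∑ ℓ ∈ L, if ℓ ∈ covE G hG s(x, Y x) then z ℓ else 0 :=
            Finset.sum_congr rfl fun x _ => Finset.sum_filter _ _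
        _ = ∑ ℓ ∈ L, ∑ x ∈ F, if ℓ ∈ covE G hG s(x, Y x) then z ℓ else 0 :=
            Finset.sum_comm
        _ = ∑ ℓ ∈ L, ((F.filter (fun x => ℓ ∈ covE G hG s(x, Y x))).card : ℝ) * z ℓ := by
            refine Finset.sum_congr rfl fun ℓ _ => ?_
            rw [← Finset.sum_filter, Finset.sum_const, nsmul_eq_mul]
    have split : (∑ ℓ ∈ L, ((F.filter (fun x => ℓ ∈ covE G hG s(x, Y x))).card : ℝ) * z ℓ)
        = (∑ ℓ ∈ L.filter (fun ℓ => ℓ.1 ∈ K ∧ ℓ.2 ∈ K),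
            ((F.filter (fun x => ℓ ∈ covE G hG s(x, Y x))).card : ℝ) * z ℓ)
        + ∑ ℓ ∈ L.filter (fun ℓ => ¬(ℓ.1 ∈ K ∧ ℓ.2 ∈ K)),
            ((F.filter (fun x => ℓ ∈ covE G hG s(x, Y x))).card : ℝ) * z ℓ :=
      (Finset.sum_filter_add_sum_filter_not L _ _).symm
    have bound1 : (∑ ℓ ∈ L.filter (fun ℓ => ℓ.1 ∈ K ∧ ℓ.2 ∈ K),
          ((F.filter (fun x => ℓ ∈ covE G hG s(x, Y x))).card : ℝ) * z ℓ)
        ≤ 3 * ∑ ℓ ∈ L.filter (fun ℓ => ℓ.1 ∈ K ∧ ℓ.2 ∈ K), c ℓ * z ℓ := by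
      rw [Finset.mul_sum]
      refine Finset.sum_le_sum fun ℓ hℓ => ?_
      have hℓL : ℓ ∈ L := (Finset.mem_filter.mp hℓ).1
      have h1c : 1 ≤ c ℓ := (hc ℓ hℓL).1
      have hzℓ := hz0 ℓ
      have hn : ((F.filter (fun x => ℓ ∈ covE G hG s(x, Y x))).card : ℝ) ≤ 3 := by
        exact_mod_cast hn3 ℓ
      nlinarith
    have bound2 : (∑ ℓ ∈ L.filter (fun ℓ => ¬(ℓ.1 ∈ K ∧ ℓ.2 ∈ K)),
          ((F.filter (fun x => ℓ ∈ covE G hG s(x, Y x))).card : ℝ) * z ℓ)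
        ≤ 3 * (2 / ε) := by
      have hb : ∀ ℓ ∈ L.filter (fun ℓ => ¬(ℓ.1 ∈ K ∧ ℓ.2 ∈ K)),
          ((F.filter (fun x => ℓ ∈ covE G hG s(x, Y x))).card : ℝ) * z ℓ
          ≤ 3 * (if ℓ ∈ covE G hG s(u, v) then z ℓ else 0) := by
        intro ℓ hℓ
        obtain ⟨hℓL, hnPin⟩ := Finset.mem_filter.mp hℓ
        rcases Nat.eq_zero_or_pos (F.filter (fun x => ℓ ∈ covE G hG s(x, Y x))).card
          with h0 | hpos
        · rw [h0]
          push_cast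
          rw [zero_mul]
          split_ifs
          · nlinarith [hz0 ℓ]
          · norm_num
        · have hm := hcross ℓ hnPin hpos
          rw [if_pos hm]
          have hn : ((F.filter (fun x => ℓ ∈ covE G hG s(x, Y x))).card : ℝ) ≤ 3 := by
            exact_mod_cast hn3 ℓ
          nlinarith [hz0 ℓ]
      calc (∑ ℓ ∈ L.filter (fun ℓ => ¬(ℓ.1 ∈ K ∧ ℓ.2 ∈ K)),
            ((F.filter (fun x => ℓ ∈ covE G hG s(x, Y x))).card : ℝ) * z ℓ)
          ≤ ∑ ℓ ∈ L.filter (fun ℓ => ¬(ℓ.1 ∈ K ∧ ℓ.2 ∈ K)),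
              3 * (if ℓ ∈ covE G hG s(u, v) then z ℓ else 0) := Finset.sum_le_sum hb
        _ = 3 * ∑ ℓ ∈ L.filter (fun ℓ => ¬(ℓ.1 ∈ K ∧ ℓ.2 ∈ K)),
              (if ℓ ∈ covE G hG s(u, v) then z ℓ else 0) := by rw [Finset.mul_sum]
        _ ≤ 3 * ∑ ℓ ∈ L, (if ℓ ∈ covE G hG s(u, v) then z ℓ else 0) := by
            have hmono : (∑ ℓ ∈ L.filter (fun ℓ => ¬(ℓ.1 ∈ K ∧ ℓ.2 ∈ K)),
                (if ℓ ∈ covE G hG s(u, v) then z ℓ else 0))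
                ≤ ∑ ℓ ∈ L, (if ℓ ∈ covE G hG s(u, v) then z ℓ else 0) := by
              refine Finset.sum_le_sum_of_subset_of_nonneg (Finset.filter_subset _ _)
                fun ℓ _ _ => ?_
              split_ifs
              · exact hz0 ℓ
              · exact le_rfl
            linarith
        _ = 3 * ∑ ℓ ∈ L.filter (· ∈ covE G hG s(u, v)), z ℓ := by
            rw [← Finset.sum_filter]
        _ ≤ 3 * (2 / ε) := by
            have := hthincov s(u, v) ((SimpleGraph.mem_edgeSet _).mpr h)
            linarith
    rw [hleafF]
    have hchain : (F.card : ℝ)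
        ≤ 3 * (∑ ℓ ∈ L.filter (fun ℓ => ℓ.1 ∈ K ∧ ℓ.2 ∈ K), c ℓ * z ℓ) + 3 * (2 / ε) := by
      rw [step2] at step1
      rw [split] at step1
      linarith
    have h12 : (3 : ℝ) * (4 * M / ε ^ 2) = 12 * M / ε ^ 2 := by ring
    have h48 : (12 : ℝ) * M / ε ^ 2 + 36 * M / ε ^ 2 = 48 * M / ε ^ 2 := by ring
    have h62 : (3 : ℝ) * (2 / ε) = 6 / ε := by ring
    nlinarith [hcost, h6, hchain]
end

section
/- (TAP rounding bound) For an unweighted tree augmentation instance on a tree T rooted at r, with feasible fractional solution z split into in-links z^{in} and cross-links z^{cr}, there exists a feasible set of links S with |S| ≤ 2·z^{in}(L) + (3/2)·z^{cr}(L). -/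
open SimpleGraph
open scoped Classical
set_option linter.unusedSectionVars false

/-- A cross-link w.r.t. the root `r`: its endpoints lie in two different components of
`T − r` (so its tree path passes through `r`). Other links are in-links. -/
def CrossLink {V : Type*} (G : SimpleGraph V) (r : V) (ℓ : V × V) : Prop :=
  ℓ.1 ≠ r ∧ ℓ.2 ≠ r ∧ ¬ (G.deleteEdges {e | r ∈ e}).Reachable ℓ.1 ℓ.2

/-- The in-link part `z^{in}` of `z`. -/
noncomputable def inPart {V : Type*} (G : SimpleGraph V) (r : V) (z : V × V → ℝ) :
    V × V → ℝ := fun ℓ => if CrossLink G r ℓ then 0 else z ℓ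

/-- The cross-link part `z^{cr}` of `z`. -/
noncomputable def crPart {V : Type*} (G : SimpleGraph V) (r : V) (z : V × V → ℝ) :
    V × V → ℝ := fun ℓ => if CrossLink G r ℓ then z ℓ else 0

namespace TAPaux

open SimpleGraph Walk List

variable {V : Type*} [Fintype V] [DecidableEq V] (G : SimpleGraph V) (hG : G.IsTree) (r : V)

lemma tpath_isPath (u v : V) : (tpath G hG u v).IsPath :=
  (hG.existsUnique_path u v).choose_spec.1

lemma path_eq_tpath {u v : V} (p : G.Walk u v) (hp : p.IsPath) : p = tpath G hG u v :=
  (hG.existsUnique_path u v).choose_spec.2 p hp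

lemma tpath_edges_subset {u v : V} (w : G.Walk u v) {e} (he : e ∈ (tpath G hG u v).edges) :
    e ∈ w.edges := by
  rw [← path_eq_tpath G hG w.bypass w.bypass_isPath] at he
  exact w.edges_bypass_subset he

lemma tpath_self (v : V) : tpath G hG v v = Walk.nil :=
  (path_eq_tpath G hG Walk.nil IsPath.nil).symm

lemma tpath_adj {u v : V} (h : G.Adj u v) :
    (tpath G hG u v).edges = [s(u, v)] := by
  have hp : (Walk.cons h Walk.nil : G.Walk u v).IsPath := by
    simp [Walk.isPath_def, h.ne]
  rw [← path_eq_tpath G hG _ hp]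
  simp

/-- The edges of the path from `v` up to the root `r`, in order starting from `v`. -/
noncomputable def listE (v : V) : List (Sym2 V) := (tpath G hG v r).edges

lemma listE_nodup (v : V) : (listE G hG r v).Nodup :=
  (tpath_isPath G hG v r).isTrail.edges_nodup

lemma listE_r : listE G hG r r = [] := by
  simp [listE, tpath_self]

lemma up_cons {v : V} (hv : v ≠ r) :
    ∃ (x : V) (h : G.Adj v x), tpath G hG v r = Walk.cons h (tpath G hG x r) := by
  obtain ⟨x, h, q, hq⟩ := Walk.exists_eq_cons_of_ne hv (tpath G hG v r)
  have hp := tpath_isPath G hG v r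
  rw [hq] at hp
  refine ⟨x, h, ?_⟩
  rw [hq, path_eq_tpath G hG q hp.of_cons]

lemma listE_cons {v : V} (hv : v ≠ r) :
    ∃ x, G.Adj v x ∧ listE G hG r v = s(v, x) :: listE G hG r x := by
  obtain ⟨x, h, hw⟩ := up_cons G hG r hv
  exact ⟨x, h, by rw [listE, hw, Walk.edges_cons]; rfl⟩

lemma listE_eq_nil_iff {v : V} : listE G hG r v = [] ↔ v = r := by
  constructor
  · intro h
    by_contra hv
    obtain ⟨x, -, hx⟩ := listE_cons G hG r hv
    rw [h] at hx; exact List.cons_ne_nil _ _ hx.symm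
  · intro h; rw [h]; exact listE_r G hG r


lemma exists_lo {e : Sym2 V} (he : e ∈ G.edgeSet) :
    ∃ p : V × V, e = s(p.1, p.2) ∧ listE G hG r p.1 = e :: listE G hG r p.2 := by
  induction e using Sym2.ind with
  | _ u w =>
    have hadj : G.Adj u w := he
    have hsingle : (tpath G hG u w).edges = [s(u, w)] := tpath_adj G hG hadj
    have hmem : s(u, w) ∈ (tpath G hG u r).edges ∨ s(u, w) ∈ (tpath G hG w r).edges := by
      have h1 : s(u, w) ∈ ((tpath G hG u r).append (tpath G hG w r).reverse).edges := by
        apply tpath_edges_subset G hG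
        rw [hsingle]; simp
      rw [Walk.edges_append, Walk.edges_reverse] at h1
      simpa using h1
    have key : ∀ a b : V, G.Adj a b → s(a, b) ∈ (tpath G hG a r).edges →
        listE G hG r a = s(a, b) :: listE G hG r b := by
      intro a b hab hmem'
      have ha : a ≠ r := by
        intro h; rw [h] at hmem'
        have h0 : (tpath G hG r r).edges = [] := by rw [tpath_self]; rfl
        rw [h0] at hmem'; simp at hmem'
      obtain ⟨x, hax, hx⟩ := up_cons G hG r ha
      rw [hx, Walk.edges_cons] at hmem'
      rcases List.mem_cons.1 hmem' with h | h
      · have hbx : b = x := by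
          rw [Sym2.eq_iff] at h
          rcases h with ⟨-, h⟩ | ⟨h1, h2⟩
          · exact h
          · exact absurd h1 hax.ne
        rw [listE, hx, Walk.edges_cons, hbx]; rfl
      · exfalso
        have hsup : a ∈ (tpath G hG x r).support :=
          (tpath G hG x r).fst_mem_support_of_mem_edges h
        have hp := tpath_isPath G hG a r
        rw [hx, Walk.cons_isPath_iff] at hp
        exact hp.2 hsup
    rcases hmem with h | h
    · exact ⟨(u, w), rfl, key u w hadj h⟩
    · have h' : s(w, u) ∈ (tpath G hG w r).edges := by rwa [Sym2.eq_swap] at h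
      exact ⟨(w, u), Sym2.eq_swap, by rw [Sym2.eq_swap (a := u) (b := w)]; exact key w u hadj.symm h'⟩

/-- The lower endpoint of a tree edge (farther from the root), paired with the upper one. -/
noncomputable def loHi (e : Sym2 V) : V × V :=
  if h : ∃ p : V × V, e = s(p.1, p.2) ∧ listE G hG r p.1 = e :: listE G hG r p.2 then
    h.choose else (r, r)

noncomputable def lo (e : Sym2 V) : V := (loHi G hG r e).1
noncomputable def hi (e : Sym2 V) : V := (loHi G hG r e).2

lemma lo_spec {e : Sym2 V} (he : e ∈ G.edgeSet) :
    e = s(lo G hG r e, hi G hG r e) ∧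
      listE G hG r (lo G hG r e) = e :: listE G hG r (hi G hG r e) := by
  have h := exists_lo G hG r he
  rw [lo, hi, loHi, dif_pos h]
  exact h.choose_spec

lemma head_mem_listE {e : Sym2 V} (he : e ∈ G.edgeSet) : e ∈ listE G hG r (lo G hG r e) := by
  rw [(lo_spec G hG r he).2]; simp

lemma lo_unique {e : Sym2 V} (he : e ∈ G.edgeSet) {u w : V} (h1 : e = s(u, w))
    (h2 : listE G hG r u = e :: listE G hG r w) : u = lo G hG r e ∧ w = hi G hG r e := by
  obtain ⟨hs, hl⟩ := lo_spec G hG r he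
  have hs' : s(u, w) = s(lo G hG r e, hi G hG r e) := h1.symm.trans hs
  rw [Sym2.eq_iff] at hs'
  rcases hs' with ⟨hu, hw⟩ | ⟨hu, hw⟩
  · exact ⟨hu, hw⟩
  · exfalso
    rw [hu] at h2
    rw [hw] at h2
    rw [h2] at hl
    have := congrArg List.length hl
    simp at this
    omega

lemma listE_inj {x y : V} (h : listE G hG r x = listE G hG r y) : x = y := by
  by_cases hx : x = r
  · rw [hx] at h; rw [listE_r] at h
    exact hx.trans ((listE_eq_nil_iff G hG r).1 h.symm).symm
  · obtain ⟨a, hadj, ha⟩ := listE_cons G hG r hx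
    have hy : y ≠ r := by
      intro hy; rw [hy, listE_r] at h; rw [h] at ha; exact List.cons_ne_nil _ _ ha.symm
    obtain ⟨b, hbadj, hb⟩ := listE_cons G hG r hy
    have hc : s(y, b) :: listE G hG r b = s(x, a) :: listE G hG r a := by
      rw [← hb, ← h, ha]
    obtain ⟨hhead, htail⟩ := List.cons_eq_cons.1 hc
    have he : s(x, a) ∈ G.edgeSet := hadj
    have h1 := lo_unique G hG r he rfl ha
    have h2 := lo_unique G hG r he hhead.symm (hb.trans (by rw [hhead, htail]))
    exact (h1.1.trans h2.1.symm)

lemma suffix_of_mem_aux : ∀ (n : ℕ) (v : V) (e : Sym2 V), (listE G hG r v).length ≤ n →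
    e ∈ listE G hG r v → listE G hG r (lo G hG r e) <:+ listE G hG r v := by
  intro n
  induction n with
  | zero =>
    intro v e hlen hmem
    rw [List.length_eq_zero_iff.1 (Nat.le_zero.1 hlen)] at hmem
    simp at hmem
  | succ n ih =>
    intro v e hlen hmem
    have hv : v ≠ r := by
      intro h; rw [h, listE_r] at hmem; simp at hmem
    obtain ⟨x, hadj, hx⟩ := listE_cons G hG r hv
    rw [hx] at hmem
    rcases List.mem_cons.1 hmem with h | h
    · have hlo := lo_unique G hG r (e := e) (by rw [h]; exact hadj) h
        (by rw [h]; exact hx)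
      rw [← hlo.1]
    · have hlen' : (listE G hG r x).length ≤ n := by
        have := congrArg List.length hx
        simp at this; omega
      exact (ih x e hlen' h).trans (by rw [hx]; exact List.suffix_cons _ _)

lemma suffix_of_mem {v : V} {e : Sym2 V} (hmem : e ∈ listE G hG r v) :
    listE G hG r (lo G hG r e) <:+ listE G hG r v :=
  suffix_of_mem_aux G hG r (listE G hG r v).length v e le_rfl hmem

lemma mem_edgeSet_of_mem_listE {v : V} {e : Sym2 V} (hmem : e ∈ listE G hG r v) :
    e ∈ G.edgeSet := (tpath G hG v r).edges_subset_edgeSet hmem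

lemma suffix_of_mem_support_aux : ∀ (n : ℕ) (v x : V), (listE G hG r v).length ≤ n →
    x ∈ (tpath G hG v r).support → listE G hG r x <:+ listE G hG r v := by
  intro n
  induction n with
  | zero =>
    intro v x hlen hmem
    have hv : v = r := (listE_eq_nil_iff G hG r).1 (List.length_eq_zero_iff.1 (Nat.le_zero.1 hlen))
    rw [hv] at hmem ⊢
    rw [tpath_self] at hmem
    simp at hmem
    rw [hmem]
  | succ n ih =>
    intro v x hlen hmem
    by_cases hv : v = r
    · rw [hv] at hmem ⊢
      rw [tpath_self] at hmem
      simp at hmem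
      rw [hmem]
    · obtain ⟨y, hadj, hy⟩ := up_cons G hG r hv
      rw [hy, Walk.support_cons] at hmem
      rcases List.mem_cons.1 hmem with h | h
      · rw [h]
      · have hlist : listE G hG r v = s(v, y) :: listE G hG r y := by
          rw [listE, hy, Walk.edges_cons]; rfl
        have hlen' : (listE G hG r y).length ≤ n := by
          have := congrArg List.length hlist; simp at this; omega
        exact (ih y x hlen' h).trans (by rw [hlist]; exact List.suffix_cons _ _)

lemma suffix_of_mem_support {v x : V} (hmem : x ∈ (tpath G hG v r).support) :
    listE G hG r x <:+ listE G hG r v :=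
  suffix_of_mem_support_aux G hG r (listE G hG r v).length v x le_rfl hmem

lemma chain_total {v : V} {e f : Sym2 V} (he : e ∈ listE G hG r v) (hf : f ∈ listE G hG r v) :
    e ∈ listE G hG r (lo G hG r f) ∨ f ∈ listE G hG r (lo G hG r e) := by
  rcases List.suffix_or_suffix_of_suffix (suffix_of_mem G hG r he) (suffix_of_mem G hG r hf) with
    h | h
  · left
    exact h.subset (head_mem_listE G hG r (mem_edgeSet_of_mem_listE G hG r he))
  · right
    exact h.subset (head_mem_listE G hG r (mem_edgeSet_of_mem_listE G hG r hf))

lemma eq_of_mem_both {e f : Sym2 V}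
    (h1 : e ∈ listE G hG r (lo G hG r f)) (h2 : f ∈ listE G hG r (lo G hG r e)) : e = f := by
  have he : e ∈ G.edgeSet := mem_edgeSet_of_mem_listE G hG r h1
  have hf : f ∈ G.edgeSet := mem_edgeSet_of_mem_listE G hG r h2
  have s1 := suffix_of_mem G hG r h1
  have s2 := suffix_of_mem G hG r h2
  have heq : listE G hG r (lo G hG r e) = listE G hG r (lo G hG r f) :=
    s1.sublist.antisymm s2.sublist
  have hlo : lo G hG r e = lo G hG r f := listE_inj G hG r heq
  have e1 := (lo_spec G hG r he).2
  have e2 := (lo_spec G hG r hf).2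
  rw [hlo, e2] at e1
  exact ((List.cons_eq_cons.1 e1).1).symm

lemma mem_support_of_edge {a b : V} {p : G.Walk a b} {e : Sym2 V} (he : e ∈ p.edges) {x : V}
    (hx : x ∈ e) : x ∈ p.support := by
  induction e using Sym2.ind with
  | _ c d =>
    rcases Sym2.mem_iff.1 hx with h | h
    · rw [h]; exact p.fst_mem_support_of_mem_edges he
    · rw [h]; exact p.snd_mem_support_of_mem_edges he

lemma T3 {a b u w : V} (hu : u ∈ (tpath G hG a b).support) (hw : w ∈ (tpath G hG a b).support)
    {e : Sym2 V} (he : e ∈ (tpath G hG u w).edges) : e ∈ (tpath G hG a b).edges := by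
  have h1 : e ∈ (((tpath G hG a b).takeUntil u hu).reverse.append
      ((tpath G hG a b).takeUntil w hw)).edges := tpath_edges_subset G hG _ he
  rw [Walk.edges_append, Walk.edges_reverse] at h1
  rcases List.mem_append.1 h1 with h | h
  · exact (tpath G hG a b).edges_takeUntil_subset hu (List.mem_reverse.1 h)
  · exact (tpath G hG a b).edges_takeUntil_subset hw h

lemma lo_mem_self {e : Sym2 V} (he : e ∈ G.edgeSet) : lo G hG r e ∈ e := by
  induction e using Sym2.ind with
  | _ u w =>
    rcases Sym2.eq_iff.1 (lo_spec G hG r he).1 with ⟨h1, h2⟩ | ⟨h1, h2⟩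
    · rw [← h1]; simp
    · rw [← h2]; simp

lemma hi_mem_self {e : Sym2 V} (he : e ∈ G.edgeSet) : hi G hG r e ∈ e := by
  induction e using Sym2.ind with
  | _ u w =>
    rcases Sym2.eq_iff.1 (lo_spec G hG r he).1 with ⟨h1, h2⟩ | ⟨h1, h2⟩
    · rw [← h2]; simp
    · rw [← h1]; simp

lemma cone_subset {a b : V} (hr : r ∈ (tpath G hG a b).support) {e : Sym2 V}
    (he : e ∈ (tpath G hG a b).edges) :
    ∀ f ∈ listE G hG r (lo G hG r e), f ∈ (tpath G hG a b).edges := by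
  intro f hf
  have he2 : e ∈ G.edgeSet := (tpath G hG a b).edges_subset_edgeSet he
  have hsup : lo G hG r e ∈ (tpath G hG a b).support :=
    mem_support_of_edge G he (lo_mem_self G hG r he2)
  exact T3 G hG hsup hr hf

lemma cross_root_support {l : V × V} (hc : CrossLink G r l) :
    r ∈ (tpath G hG l.1 l.2).support := by
  by_contra h
  apply hc.2.2
  exact ⟨(tpath G hG l.1 l.2).toDeleteEdges {e | r ∈ e}
    (fun e he2 hre => h (mem_support_of_edge G he2 hre))⟩

lemma bridge_union {l : V × V} {e : Sym2 V} (he : e ∈ (tpath G hG l.1 l.2).edges) :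
    e ∈ listE G hG r l.1 ∨ e ∈ listE G hG r l.2 := by
  have h1 : e ∈ ((tpath G hG l.1 r).append (tpath G hG l.2 r).reverse).edges :=
    tpath_edges_subset G hG _ he
  rw [Walk.edges_append, Walk.edges_reverse] at h1
  rcases List.mem_append.1 h1 with h | h
  · exact Or.inl h
  · exact Or.inr (List.mem_reverse.1 h)

lemma dc {a b : V} {e g f' : Sym2 V} (hae : e ∈ (tpath G hG a b).edges)
    (hg : g ∈ (tpath G hG a b).edges) (hg2 : g ∈ listE G hG r (lo G hG r e))
    (hf' : f' ∈ listE G hG r (lo G hG r e)) (hbet : g ∈ listE G hG r (lo G hG r f')) :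
    f' ∈ (tpath G hG a b).edges := by
  by_cases hcase : f' ∈ listE G hG r (lo G hG r g)
  · have : g = f' := eq_of_mem_both G hG r hbet hcase
    rwa [← this]
  · have he2 : e ∈ G.edgeSet := (tpath G hG a b).edges_subset_edgeSet hae
    have hg' : g ∈ G.edgeSet := (tpath G hG a b).edges_subset_edgeSet hg
    have hloe_sup : lo G hG r e ∈ (tpath G hG a b).support :=
      mem_support_of_edge G hae (lo_mem_self G hG r he2)
    have hlog_sup : lo G hG r g ∈ (tpath G hG a b).support :=
      mem_support_of_edge G hg (lo_mem_self G hG r hg')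
    have hx : lo G hG r g ∈ (tpath G hG (lo G hG r e) r).support :=
      mem_support_of_edge G hg2 (lo_mem_self G hG r hg')
    set P := tpath G hG (lo G hG r e) r with hP
    have hsplit := P.take_spec hx
    have hdrop : P.dropUntil (lo G hG r g) hx = tpath G hG (lo G hG r g) r :=
      path_eq_tpath G hG _ ((tpath_isPath G hG _ _).dropUntil hx)
    have htake : P.takeUntil (lo G hG r g) hx = tpath G hG (lo G hG r e) (lo G hG r g) :=
      path_eq_tpath G hG _ ((tpath_isPath G hG _ _).takeUntil hx)
    have hedges : listE G hG r (lo G hG r e) =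
        (P.takeUntil (lo G hG r g) hx).edges ++ listE G hG r (lo G hG r g) := by
      conv_lhs => rw [listE, ← hP, ← hsplit]
      rw [Walk.edges_append, hdrop]
      rfl
    have hftake : f' ∈ (P.takeUntil (lo G hG r g) hx).edges := by
      rw [hedges] at hf'
      rcases List.mem_append.1 hf' with h | h
      · exact h
      · exact absurd h hcase
    rw [htake] at hftake
    exact T3 G hG hloe_sup hlog_sup hftake

/-- How far up the chain from `lo e` the path of link `l` covers. -/
noncomputable def reach (e : Sym2 V) (l : V × V) : ℕ :=
  ((listE G hG r (lo G hG r e)).toFinset.filter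
    (fun f => f ∈ (tpath G hG l.1 l.2).edges)).card

lemma dc_mono {e : Sym2 V} {l l' : V × V}
    (h1 : e ∈ (tpath G hG l.1 l.2).edges) (h2 : e ∈ (tpath G hG l'.1 l'.2).edges)
    (hr : reach G hG r e l ≤ reach G hG r e l') {f : Sym2 V}
    (hf1 : f ∈ listE G hG r (lo G hG r e)) (hf2 : f ∈ (tpath G hG l.1 l.2).edges) :
    f ∈ (tpath G hG l'.1 l'.2).edges := by
  by_contra hf3
  set A := (listE G hG r (lo G hG r e)).toFinset.filter
    (fun f => f ∈ (tpath G hG l.1 l.2).edges) with hA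
  set B := (listE G hG r (lo G hG r e)).toFinset.filter
    (fun f => f ∈ (tpath G hG l'.1 l'.2).edges) with hB
  have hsub : B ⊆ A := by
    intro g hgB
    rw [hB, Finset.mem_filter, List.mem_toFinset] at hgB
    rcases chain_total G hG r (v := lo G hG r e) hgB.1 hf1 with h | h
    · exact absurd (dc G hG r h2 hgB.2 hgB.1 hf1 h) hf3
    · rw [hA, Finset.mem_filter, List.mem_toFinset]
      exact ⟨hgB.1, dc G hG r h1 hf2 hf1 hgB.1 h⟩
  have hfA : f ∈ A := by rw [hA, Finset.mem_filter, List.mem_toFinset]; exact ⟨hf1, hf2⟩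
  have hfB : f ∉ B := by
    rw [hB, Finset.mem_filter]; rintro ⟨-, h⟩; exact hf3 h
  have hlt : B.card < A.card :=
    Finset.card_lt_card ⟨hsub, fun hAB => hfB (hAB hfA)⟩
  rw [reach, reach, ← hA, ← hB] at hr
  omega

lemma edges_at_vertex_aux {x : V} : ∀ {u v : V} (p : G.Walk u v), p.IsPath →
    (p.edges.filter (fun e => decide (x ∈ e))).length ≤ 2 ∧
      (x = u → (p.edges.filter (fun e => decide (x ∈ e))).length ≤ 1) := by
  intro u v p
  induction p with
  | nil => intro _; simp
  | @cons u c v h q ih =>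
    intro hp
    have hq := hp.of_cons
    have hu : u ∉ q.support := ((Walk.cons_isPath_iff h q).1 hp).2
    obtain ⟨ihq1, ihq2⟩ := ih hq
    rw [Walk.edges_cons, List.filter_cons]
    by_cases hxu : x = u
    · have hz : (q.edges.filter (fun e => decide (x ∈ e))).length = 0 := by
        rw [List.length_eq_zero_iff, List.filter_eq_nil_iff]
        intro e he2
        simp only [decide_eq_true_eq]
        intro hxe
        exact hu (by rw [← hxu]; exact mem_support_of_edge G he2 hxe)
      have key : (if decide (x ∈ s(u, c)) = true
          then s(u, c) :: q.edges.filter (fun e => decide (x ∈ e))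
          else q.edges.filter (fun e => decide (x ∈ e))).length ≤ 1 := by
        split
        · rw [List.length_cons, hz]
        · rw [hz]; omega
      exact ⟨key.trans (by omega), fun _ => key⟩
    · by_cases hxc : x = c
      · rw [if_pos (by simp [Sym2.mem_iff, hxc])]
        refine ⟨?_, fun hcon => absurd hcon hxu⟩
        rw [List.length_cons]
        have := ihq2 hxc
        omega
      · rw [if_neg (by simp [Sym2.mem_iff, hxu, hxc])]
        exact ⟨ihq1, fun hcon => absurd hcon hxu⟩

lemma no_three_edges {a b : V} {x : V} {e1 e2 e3 : Sym2 V}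
    (h12 : e1 ≠ e2) (h13 : e1 ≠ e3) (h23 : e2 ≠ e3)
    (m1 : e1 ∈ (tpath G hG a b).edges) (m2 : e2 ∈ (tpath G hG a b).edges)
    (m3 : e3 ∈ (tpath G hG a b).edges)
    (x1 : x ∈ e1) (x2 : x ∈ e2) (x3 : x ∈ e3) : False := by
  have hsub : ({e1, e2, e3} : Finset (Sym2 V)) ⊆
      ((tpath G hG a b).edges.filter (fun e => decide (x ∈ e))).toFinset := by
    intro e he4
    rw [List.mem_toFinset, List.mem_filter]
    simp only [Finset.mem_insert, Finset.mem_singleton] at he4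
    rcases he4 with rfl | rfl | rfl
    · exact ⟨m1, by simpa using x1⟩
    · exact ⟨m2, by simpa using x2⟩
    · exact ⟨m3, by simpa using x3⟩
  have hcard : ({e1, e2, e3} : Finset (Sym2 V)).card = 3 := by
    rw [Finset.card_insert_of_notMem (by simp [h12, h13]),
      Finset.card_insert_of_notMem (by simp [h23]), Finset.card_singleton]
  have hle := Finset.card_le_card hsub
  have h2 := (edges_at_vertex_aux G (x := x) (tpath G hG a b) (tpath_isPath G hG a b)).1
  have h3 := List.toFinset_card_le ((tpath G hG a b).edges.filter (fun e => decide (x ∈ e)))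
  omega

variable (L : Finset (V × V))

/-- Candidate links covering edge `e`. -/
noncomputable def Cand (e : Sym2 V) : Finset (V × V) :=
  L.filter (fun l => e ∈ (tpath G hG l.1 l.2).edges)

lemma mem_Cand {e : Sym2 V} {l : V × V} :
    l ∈ Cand G hG L e ↔ l ∈ L ∧ e ∈ (tpath G hG l.1 l.2).edges := Finset.mem_filter

/-- `e` is a *high* edge: some link of `L` covers `e` together with the whole chain
from `lo e` up to the root. -/
def high (e : Sym2 V) : Prop :=
  ∃ l ∈ L, e ∈ (tpath G hG l.1 l.2).edges ∧
    ∀ f ∈ listE G hG r (lo G hG r e), f ∈ (tpath G hG l.1 l.2).edges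

/-- The greedy response link for a newly uncovered ("trigger") edge `e`. -/
noncomputable def resp (e : Sym2 V) : V × V :=
  if high G hG r L e then (lo G hG r e, r)
  else if h : (Cand G hG L e).Nonempty then
    (Finset.exists_max_image (Cand G hG L e) (reach G hG r e) h).choose
  else (lo G hG r e, r)

def covered (S : List (V × V)) (e : Sym2 V) : Prop :=
  ∃ l ∈ S, e ∈ (tpath G hG l.1 l.2).edges

lemma covered_mono {S S' : List (V × V)} (hsub : ∀ l ∈ S, l ∈ S') {e : Sym2 V}
    (h : covered G hG S e) : covered G hG S' e := by
  obtain ⟨l, hl, he⟩ := h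
  exact ⟨l, hsub l hl, he⟩

/-- The greedy pass over the edges: returns the list of trigger edges. -/
noncomputable def run : List (Sym2 V) → List (V × V) → List (Sym2 V)
  | [], _ => []
  | e :: es, S =>
    if covered G hG S e then run es S
    else e :: run es (resp G hG r L e :: S)

lemma run_sublist : ∀ (es : List (Sym2 V)) (S : List (V × V)), run G hG r L es S <+ es := by
  intro es
  induction es with
  | nil => intro S; simp [run]
  | cons e es ih =>
    intro S
    rw [run]
    split
    · exact (ih S).trans (List.sublist_cons_self _ _)
    · exact (ih _).cons₂ e

lemma run_not_covered : ∀ (es : List (Sym2 V)) (S : List (V × V)),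
    ∀ e ∈ run G hG r L es S, ¬ covered G hG S e := by
  intro es
  induction es with
  | nil => intro S e he; simp [run] at he
  | cons e es ih =>
    intro S f hf
    rw [run] at hf
    split at hf
    · exact ih S f hf
    · rcases List.mem_cons.1 hf with rfl | hf'
      · assumption
      · intro hcov
        exact ih _ f hf' (covered_mono G hG (fun l hl => List.mem_cons_of_mem _ hl) hcov)

lemma run_pairwise : ∀ (es : List (Sym2 V)) (S : List (V × V)),
    (run G hG r L es S).Pairwise
      (fun a b => b ∉ (tpath G hG (resp G hG r L a).1 (resp G hG r L a).2).edges) := by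
  intro es
  induction es with
  | nil => intro S; simp [run]
  | cons e es ih =>
    intro S
    rw [run]
    split
    · exact ih S
    · refine List.Pairwise.cons ?_ (ih _)
      intro b hb hbe
      exact run_not_covered G hG r L es _ b hb ⟨resp G hG r L e, List.mem_cons_self, hbe⟩

lemma resp_covers_self {e : Sym2 V} (he : e ∈ G.edgeSet) (hne : (Cand G hG L e).Nonempty) :
    e ∈ (tpath G hG (resp G hG r L e).1 (resp G hG r L e).2).edges := by
  by_cases hh : high G hG r L e
  · rw [resp, if_pos hh]
    exact head_mem_listE G hG r he
  · rw [resp, if_neg hh, dif_pos hne]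
    have hspec := (Finset.exists_max_image (Cand G hG L e) (reach G hG r e) hne).choose_spec
    exact (mem_Cand G hG L |>.1 hspec.1).2

lemma resp_low_spec {e : Sym2 V} (hnh : ¬ high G hG r L e) (hne : (Cand G hG L e).Nonempty) :
    resp G hG r L e ∈ Cand G hG L e ∧
      ∀ l ∈ Cand G hG L e, reach G hG r e l ≤ reach G hG r e (resp G hG r L e) := by
  rw [resp, if_neg hnh, dif_pos hne]
  have hspec := (Finset.exists_max_image (Cand G hG L e) (reach G hG r e) hne).choose_spec
  exact ⟨hspec.1, hspec.2⟩

lemma uplink_mem (hsc : ∀ l ∈ L, ∀ p q : V,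
      (∀ e ∈ (tpath G hG p q).edges, e ∈ (tpath G hG l.1 l.2).edges) → (p, q) ∈ L)
    {e : Sym2 V} (hhigh : high G hG r L e) : (lo G hG r e, r) ∈ L := by
  obtain ⟨l, hl, hel, hcone⟩ := hhigh
  exact hsc l hl (lo G hG r e) r hcone

lemma resp_mem (hsc : ∀ l ∈ L, ∀ p q : V,
      (∀ e ∈ (tpath G hG p q).edges, e ∈ (tpath G hG l.1 l.2).edges) → (p, q) ∈ L)
    {e : Sym2 V} (he : e ∈ G.edgeSet) (hne : (Cand G hG L e).Nonempty) :
    resp G hG r L e ∈ L := by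
  by_cases hh : high G hG r L e
  · rw [resp, if_pos hh]
    exact uplink_mem G hG r L hsc hh
  · exact (mem_Cand G hG L |>.1 (resp_low_spec G hG r L hh hne).1).1

lemma run_covers : ∀ (es : List (Sym2 V)) (S : List (V × V)),
    (∀ e ∈ es, e ∈ G.edgeSet ∧ (Cand G hG L e).Nonempty) →
    ∀ e ∈ es, covered G hG ((run G hG r L es S).map (resp G hG r L) ++ S) e := by
  intro es
  induction es with
  | nil => intro S _ e he; simp at he
  | cons e es ih =>
    intro S hes f hf
    rw [run]
    split
    · rcases List.mem_cons.1 hf with rfl | hf'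
      · exact covered_mono G hG (fun l hl => List.mem_append_right _ hl) (by assumption)
      · exact ih S (fun g hg => hes g (List.mem_cons_of_mem _ hg)) f hf'
    · rcases List.mem_cons.1 hf with rfl | hf'
      · refine ⟨resp G hG r L f, ?_, resp_covers_self G hG r L (hes f hf).1 (hes f hf).2⟩
        simp
      · have hcov := ih (resp G hG r L e :: S)
          (fun g hg => hes g (List.mem_cons_of_mem _ hg)) f hf'
        obtain ⟨l, hl, hle⟩ := hcov
        refine ⟨l, ?_, hle⟩
        simp only [List.map_cons, List.cons_append, List.mem_cons, List.mem_append] at hl ⊢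
        tauto

lemma pairwise_two_sided {α : Type*} {R : α → α → Prop} :
    ∀ {l : List α}, l.Pairwise R → ∀ {a b : α}, a ∈ l → b ∈ l → a ≠ b → R a b ∨ R b a := by
  intro l
  induction l with
  | nil => intro _ a b ha; simp at ha
  | cons x xs ih =>
    intro hp a b ha hb hab
    rw [List.pairwise_cons] at hp
    rcases List.mem_cons.1 ha with rfl | ha'
    · rcases List.mem_cons.1 hb with rfl | hb'
      · exact absurd rfl hab
      · exact Or.inl (hp.1 b hb')
    · rcases List.mem_cons.1 hb with rfl | hb'
      · exact Or.inr (hp.1 a ha')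
      · exact ih hp.2 ha' hb' hab

lemma suffix_ext {α : Type*} {l1 l2 : List α} (h : l1 <:+ l2) (hne : l1 ≠ l2) :
    ∃ a, a :: l1 <:+ l2 := by
  obtain ⟨p, hp⟩ := h
  rcases List.eq_nil_or_concat p with rfl | ⟨q, a, rfl⟩
  · exact absurd (by simpa using hp) hne
  · exact ⟨a, q, by rw [← hp]; simp⟩

lemma suffix_same_head {α : Type*} {l : List α} (hnd : l.Nodup) {t1 t2 : List α} {a : α}
    (h1 : a :: t1 <:+ l) (h2 : a :: t2 <:+ l) : t1 = t2 := by
  have key : ∀ {s1 s2 : List α}, (a :: s1 <:+ l) → (a :: s2 <:+ l) →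
      (a :: s1 <:+ a :: s2) → s1 = s2 := by
    intro s1 s2 hs1 hs2 h
    obtain ⟨p, hp⟩ := h
    cases p with
    | nil => simpa using hp
    | cons x xs =>
      exfalso
      rw [List.cons_append] at hp
      have hx : x = a := (List.cons_eq_cons.1 hp).1
      have ht : xs ++ a :: s1 = s2 := (List.cons_eq_cons.1 hp).2
      have hnd2 : (a :: s2).Nodup := hs2.sublist.nodup hnd
      rw [List.nodup_cons] at hnd2
      exact hnd2.1 (by rw [← ht]; simp)
  rcases List.suffix_or_suffix_of_suffix h1 h2 with h | h
  · exact key h1 h2 h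
  · exact (key h2 h1 h).symm

/-- Two distinct trigger edges can never lie on a common chain to the root while both
being covered by a common link. -/
lemma side_core {t : List (Sym2 V)}
    (hP : t.Pairwise (fun a b => (listE G hG r (lo G hG r b)).length ≤
      (listE G hG r (lo G hG r a)).length ∧
      b ∉ (tpath G hG (resp G hG r L a).1 (resp G hG r L a).2).edges))
    (htrig : ∀ e ∈ t, e ∈ G.edgeSet ∧ (Cand G hG L e).Nonempty)
    {l : V × V} (hl : l ∈ L) {a b : Sym2 V} (ha : a ∈ t) (hb : b ∈ t) (hab : a ≠ b)
    (hal : a ∈ (tpath G hG l.1 l.2).edges) (hbl : b ∈ (tpath G hG l.1 l.2).edges)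
    (hbmem : b ∈ listE G hG r (lo G hG r a)) : False := by
  have haE : a ∈ G.edgeSet := (htrig a ha).1
  have hbE : b ∈ G.edgeSet := (htrig b hb).1
  have hsba : listE G hG r (lo G hG r b) <:+ listE G hG r (lo G hG r a) :=
    suffix_of_mem G hG r hbmem
  have hlt : (listE G hG r (lo G hG r b)).length < (listE G hG r (lo G hG r a)).length := by
    rcases Nat.lt_or_ge (listE G hG r (lo G hG r b)).length
      (listE G hG r (lo G hG r a)).length with h | h
    · exact h
    · exfalso
      have heq : listE G hG r (lo G hG r b) = listE G hG r (lo G hG r a) :=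
        hsba.sublist.eq_of_length (le_antisymm (hsba.sublist.length_le) h)
      have hlo : lo G hG r b = lo G hG r a := listE_inj G hG r heq
      have e1 := (lo_spec G hG r haE).2
      have e2 := (lo_spec G hG r hbE).2
      rw [hlo, e1] at e2
      exact hab (List.cons_eq_cons.1 e2).1
  rcases pairwise_two_sided hP ha hb hab with hR | hR
  · apply hR.2
    by_cases hh : high G hG r L a
    · rw [resp, if_pos hh]
      exact hbmem
    · have hne := (htrig a ha).2
      have hspec := resp_low_spec G hG r L hh hne
      have hlC : l ∈ Cand G hG L a := (mem_Cand G hG L).2 ⟨hl, hal⟩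
      exact dc_mono G hG r hal ((mem_Cand G hG L).1 hspec.1).2 (hspec.2 l hlC) hbmem hbl
  · exact absurd hR.1 (by omega)

lemma side {t : List (Sym2 V)}
    (hP : t.Pairwise (fun a b => (listE G hG r (lo G hG r b)).length ≤
      (listE G hG r (lo G hG r a)).length ∧
      b ∉ (tpath G hG (resp G hG r L a).1 (resp G hG r L a).2).edges))
    (htrig : ∀ e ∈ t, e ∈ G.edgeSet ∧ (Cand G hG L e).Nonempty)
    {l : V × V} (hl : l ∈ L) {a b : Sym2 V} (ha : a ∈ t) (hb : b ∈ t) (hab : a ≠ b)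
    (hal : a ∈ (tpath G hG l.1 l.2).edges) (hbl : b ∈ (tpath G hG l.1 l.2).edges)
    {v : V} (hav : a ∈ listE G hG r v) (hbv : b ∈ listE G hG r v) : False := by
  rcases chain_total G hG r hav hbv with h | h
  · exact side_core G hG r L hP htrig hl hb ha (Ne.symm hab) hbl hal h
  · exact side_core G hG r L hP htrig hl ha hb hab hal hbl h

lemma trigger_count {t : List (Sym2 V)}
    (hP : t.Pairwise (fun a b => (listE G hG r (lo G hG r b)).length ≤
      (listE G hG r (lo G hG r a)).length ∧
      b ∉ (tpath G hG (resp G hG r L a).1 (resp G hG r L a).2).edges))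
    (htrig : ∀ e ∈ t, e ∈ G.edgeSet ∧ (Cand G hG L e).Nonempty)
    {l : V × V} (hl : l ∈ L) :
    (t.toFinset.filter (fun e => e ∈ (tpath G hG l.1 l.2).edges)).card ≤ 2 := by
  classical
  set A := t.toFinset.filter
    (fun e => e ∈ (tpath G hG l.1 l.2).edges ∧ e ∈ listE G hG r l.1) with hA
  set B := t.toFinset.filter
    (fun e => e ∈ (tpath G hG l.1 l.2).edges ∧ e ∈ listE G hG r l.2) with hB
  have hsub : t.toFinset.filter (fun e => e ∈ (tpath G hG l.1 l.2).edges) ⊆ A ∪ B := by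
    intro e he
    rw [Finset.mem_filter] at he
    rcases bridge_union G hG r he.2 with h | h
    · exact Finset.mem_union_left _ (by rw [hA, Finset.mem_filter]; exact ⟨he.1, he.2, h⟩)
    · exact Finset.mem_union_right _ (by rw [hB, Finset.mem_filter]; exact ⟨he.1, he.2, h⟩)
  have hcA : A.card ≤ 1 := by
    rw [Finset.card_le_one]
    intro a haA b hbA
    by_contra hab
    rw [hA, Finset.mem_filter, List.mem_toFinset] at haA hbA
    exact side G hG r L hP htrig hl haA.1 hbA.1 hab haA.2.1 hbA.2.1 haA.2.2 hbA.2.2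
  have hcB : B.card ≤ 1 := by
    rw [Finset.card_le_one]
    intro a haA b hbA
    by_contra hab
    rw [hB, Finset.mem_filter, List.mem_toFinset] at haA hbA
    exact side G hG r L hP htrig hl haA.1 hbA.1 hab haA.2.1 hbA.2.1 haA.2.2 hbA.2.2
  calc (t.toFinset.filter (fun e => e ∈ (tpath G hG l.1 l.2).edges)).card
      ≤ (A ∪ B).card := Finset.card_le_card hsub
    _ ≤ A.card + B.card := Finset.card_union_le _ _
    _ ≤ 2 := by omega

lemma cross_trigger_high {l : V × V} (hl : l ∈ L) (hc : CrossLink G r l) {e : Sym2 V}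
    (he : e ∈ (tpath G hG l.1 l.2).edges) :
    high G hG r L e ∧ ∀ f ∈ listE G hG r (lo G hG r e), f ∈ (tpath G hG l.1 l.2).edges := by
  have hcone := cone_subset G hG r (cross_root_support G hG r hc) he
  exact ⟨⟨l, hl, he, hcone⟩, hcone⟩

lemma cones_disjoint {t : List (Sym2 V)}
    (hP : t.Pairwise (fun a b => (listE G hG r (lo G hG r b)).length ≤
      (listE G hG r (lo G hG r a)).length ∧
      b ∉ (tpath G hG (resp G hG r L a).1 (resp G hG r L a).2).edges))
    (htrig : ∀ e ∈ t, e ∈ G.edgeSet ∧ (Cand G hG L e).Nonempty)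
    {i j : Sym2 V} (hit : i ∈ t) (hjt : j ∈ t) (hij : i ≠ j) {l : V × V} (hl : l ∈ L)
    (hci : ∀ f ∈ listE G hG r (lo G hG r i), f ∈ (tpath G hG l.1 l.2).edges)
    (hcj : ∀ f ∈ listE G hG r (lo G hG r j), f ∈ (tpath G hG l.1 l.2).edges) :
    ∀ f, f ∈ listE G hG r (lo G hG r i) → f ∈ listE G hG r (lo G hG r j) → False := by
  intro f hfi hfj
  have hiE : i ∈ G.edgeSet := (htrig i hit).1
  have hjE : j ∈ G.edgeSet := (htrig j hjt).1
  have hil : i ∈ (tpath G hG l.1 l.2).edges := hci i (head_mem_listE G hG r hiE)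
  have hjl : j ∈ (tpath G hG l.1 l.2).edges := hcj j (head_mem_listE G hG r hjE)
  set F := (listE G hG r (lo G hG r i)).toFinset ∩ (listE G hG r (lo G hG r j)).toFinset with hF
  have hFne : F.Nonempty := ⟨f, by
    rw [hF, Finset.mem_inter, List.mem_toFinset, List.mem_toFinset]; exact ⟨hfi, hfj⟩⟩
  obtain ⟨f0, hf0F, hf0max⟩ :=
    Finset.exists_max_image F (fun g => (listE G hG r (lo G hG r g)).length) hFne
  rw [hF, Finset.mem_inter, List.mem_toFinset, List.mem_toFinset] at hf0F
  obtain ⟨hf0i, hf0j⟩ := hf0F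
  have hf0E : f0 ∈ G.edgeSet := mem_edgeSet_of_mem_listE G hG r hf0i
  -- f0 is neither i nor j
  have hne_i : f0 ≠ i := by
    rintro rfl
    exact side G hG r L hP htrig hl hit hjt hij hil hjl hf0j (head_mem_listE G hG r hjE)
  have hne_j : f0 ≠ j := by
    rintro rfl
    exact side G hG r L hP htrig hl hit hjt hij hil hjl (head_mem_listE G hG r hiE) hf0i
  -- construct the two edges just below f0 on the two chains
  have buildg : ∀ (k : Sym2 V), k ∈ t → k ∈ G.edgeSet → f0 ∈ listE G hG r (lo G hG r k) →
      f0 ≠ k → ∃ g, g ∈ listE G hG r (lo G hG r k) ∧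
        listE G hG r (lo G hG r g) = g :: listE G hG r (lo G hG r f0) ∧
        hi G hG r g = lo G hG r f0 := by
    intro k hk hkE hf0k hnek
    have hsuf : listE G hG r (lo G hG r f0) <:+ listE G hG r (lo G hG r k) :=
      suffix_of_mem G hG r hf0k
    have hproper : listE G hG r (lo G hG r f0) ≠ listE G hG r (lo G hG r k) := by
      intro h
      have hlo : lo G hG r f0 = lo G hG r k := listE_inj G hG r h
      have e1 := (lo_spec G hG r hf0E).2
      have e2 := (lo_spec G hG r hkE).2
      rw [hlo, e2] at e1
      exact hnek (List.cons_eq_cons.1 e1).1.symm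
    obtain ⟨g, hg⟩ := suffix_ext hsuf hproper
    have hgmem : g ∈ listE G hG r (lo G hG r k) := hg.subset (List.mem_cons_self)
    have hgE : g ∈ G.edgeSet := mem_edgeSet_of_mem_listE G hG r hgmem
    have hgchain : listE G hG r (lo G hG r g) = g :: listE G hG r (lo G hG r f0) := by
      have h1 := (lo_spec G hG r hgE).2
      have h2 : listE G hG r (lo G hG r g) <:+ listE G hG r (lo G hG r k) :=
        suffix_of_mem G hG r hgmem
      rw [h1] at h2
      have := suffix_same_head (listE_nodup G hG r (lo G hG r k)) h2 hg
      rw [h1, this]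
    have hhig : hi G hG r g = lo G hG r f0 := by
      apply listE_inj G hG r
      have h1 := (lo_spec G hG r hgE).2
      rw [hgchain] at h1
      exact (List.cons_eq_cons.1 h1).2.symm
    exact ⟨g, hgmem, hgchain, hhig⟩
  obtain ⟨gi, hgi_mem, hgi_chain, hgi_hi⟩ := buildg i hit hiE hf0i hne_i
  obtain ⟨gj, hgj_mem, hgj_chain, hgj_hi⟩ := buildg j hjt hjE hf0j hne_j
  -- gi is not on j's chain (maximality of f0), so gi ≠ gj
  have hgi_notj : gi ∉ listE G hG r (lo G hG r j) := by
    intro hmem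
    have : gi ∈ F := by
      rw [hF, Finset.mem_inter, List.mem_toFinset, List.mem_toFinset]
      exact ⟨hgi_mem, hmem⟩
    have hle := hf0max gi this
    rw [hgi_chain] at hle
    simp at hle
  have hgigj : gi ≠ gj := by
    rintro rfl
    exact hgi_notj hgj_mem
  have hgif0 : gi ≠ f0 := by
    intro hgf
    have hnd : (gi :: listE G hG r (lo G hG r f0)).Nodup := by
      rw [← hgi_chain]; exact listE_nodup G hG r _
    rw [List.nodup_cons] at hnd
    exact hnd.1 (by rw [hgf]; exact head_mem_listE G hG r hf0E)
  have hgjf0 : gj ≠ f0 := by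
    intro hgf
    have hnd : (gj :: listE G hG r (lo G hG r f0)).Nodup := by
      rw [← hgj_chain]; exact listE_nodup G hG r _
    rw [List.nodup_cons] at hnd
    exact hnd.1 (by rw [hgf]; exact head_mem_listE G hG r hf0E)
  -- all three edges contain x := lo f0 and lie on the path of l
  have hgiE : gi ∈ G.edgeSet := mem_edgeSet_of_mem_listE G hG r hgi_mem
  have hgjE : gj ∈ G.edgeSet := mem_edgeSet_of_mem_listE G hG r hgj_mem
  have hxgi : lo G hG r f0 ∈ gi := by
    rw [← hgi_hi]
    exact hi_mem_self G hG r hgiE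
  have hxgj : lo G hG r f0 ∈ gj := by
    rw [← hgj_hi]
    exact hi_mem_self G hG r hgjE
  have hxf0 : lo G hG r f0 ∈ f0 := lo_mem_self G hG r hf0E
  exact no_three_edges G hG hgigj hgif0 hgjf0 (hci gi hgi_mem)
    (hcj gj hgj_mem) (hci f0 hf0i) hxgi hxgj hxf0

lemma pair_path {v w : V}
    (hdisj : ∀ f, f ∈ listE G hG r v → f ∈ listE G hG r w → False) :
    (∀ f ∈ listE G hG r v, f ∈ (tpath G hG v w).edges) ∧
      (∀ f ∈ listE G hG r w, f ∈ (tpath G hG v w).edges) := by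
  set W := (tpath G hG v r).append (tpath G hG w r).reverse with hW
  have hWpath : W.IsPath := by
    rw [Walk.isPath_def, hW, Walk.support_append, List.nodup_append]
    refine ⟨(tpath_isPath G hG v r).support_nodup, ?_, ?_⟩
    · exact (List.tail_sublist _).nodup ((tpath_isPath G hG w r).reverse).support_nodup
    · intro x hx y hx' hxy
      subst hxy
      have hqs : ((tpath G hG w r).reverse).support =
          r :: ((tpath G hG w r).reverse).support.tail :=
        Walk.support_eq_cons _
      have hxq : x ∈ ((tpath G hG w r).reverse).support := by
        rw [hqs]; exact List.mem_cons_of_mem _ hx'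
      have hnd := ((tpath_isPath G hG w r).reverse).support_nodup
      rw [hqs, List.nodup_cons] at hnd
      have hxr : x ≠ r := fun hxr0 => hnd.1 (hxr0 ▸ hx')
      have hxw : x ∈ (tpath G hG w r).support := by
        rw [Walk.support_reverse, List.mem_reverse] at hxq
        exact hxq
      have s1 : listE G hG r x <:+ listE G hG r v := suffix_of_mem_support G hG r hx
      have s2 : listE G hG r x <:+ listE G hG r w := suffix_of_mem_support G hG r hxw
      have hxnil : listE G hG r x ≠ [] := fun h => hxr ((listE_eq_nil_iff G hG r).1 h)
      obtain ⟨f, hf⟩ := List.exists_mem_of_ne_nil _ hxnil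
      exact hdisj f (s1.subset hf) (s2.subset hf)
  have hWeq : W = tpath G hG v w := path_eq_tpath G hG W hWpath
  have hedges : (tpath G hG v w).edges = listE G hG r v ++ (listE G hG r w).reverse := by
    rw [← hWeq, hW, Walk.edges_append, Walk.edges_reverse]
    rfl
  constructor
  · intro f hf
    rw [hedges]
    exact List.mem_append_left _ hf
  · intro f hf
    rw [hedges]
    exact List.mem_append_right _ (List.mem_reverse.2 hf)

lemma exists_maximal_matching {α : Type*} [DecidableEq α] (Adj : α → α → Prop)
    (hne : ∀ i j, Adj i j → i ≠ j) :
    ∀ H : Finset α, ∃ P : Finset (α × α),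
      (∀ p ∈ P, Adj p.1 p.2) ∧
      (P.biUnion (fun p => {p.1, p.2}) ⊆ H) ∧
      (P.biUnion (fun p => {p.1, p.2})).card = 2 * P.card ∧
      (∀ i ∈ H, i ∉ P.biUnion (fun p => {p.1, p.2}) →
        ∀ j ∈ H, j ∉ P.biUnion (fun p => {p.1, p.2}) → ¬ Adj i j) := by
  intro H
  induction H using Finset.strongInductionOn with
  | _ H ih =>
    by_cases hex : ∃ i ∈ H, ∃ j ∈ H, Adj i j
    · obtain ⟨i, hiH, j, hjH, hAdj⟩ := hex
      have hij : i ≠ j := hne i j hAdj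
      have hss : H \ {i, j} ⊂ H := by
        refine Finset.sdiff_ssubset ?_ (by simp)
        intro x hx
        simp only [Finset.mem_insert, Finset.mem_singleton] at hx
        rcases hx with rfl | rfl <;> assumption
      obtain ⟨P', hP1, hP2, hP3, hP4⟩ := ih _ hss
      have hiVm : i ∉ P'.biUnion (fun p => {p.1, p.2}) := by
        intro hmem
        have := hP2 hmem
        simp at this
      have hjVm : j ∉ P'.biUnion (fun p => {p.1, p.2}) := by
        intro hmem
        have := hP2 hmem
        simp at this
      have hnotin : (i, j) ∉ P' := by
        intro hmem
        exact hiVm (Finset.mem_biUnion.2 ⟨(i, j), hmem, by simp⟩)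
      refine ⟨insert (i, j) P', ?_, ?_, ?_, ?_⟩
      · intro p hp
        rcases Finset.mem_insert.1 hp with rfl | hp'
        · exact hAdj
        · exact hP1 p hp'
      · rw [Finset.biUnion_insert]
        intro x hx
        rcases Finset.mem_union.1 hx with hx' | hx'
        · simp only [Finset.mem_insert, Finset.mem_singleton] at hx'
          rcases hx' with rfl | rfl <;> assumption
        · exact (Finset.sdiff_subset) (hP2 hx')
      · rw [Finset.biUnion_insert, Finset.card_union_of_disjoint, Finset.card_insert_of_notMem hnotin]
        · have h2 : ({(i, j).1, (i, j).2} : Finset α).card = 2 := by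
            simp [hij]
          rw [h2, hP3]
          ring
        · rw [Finset.disjoint_left]
          intro x hx hx'
          have := hP2 hx'
          rw [Finset.mem_sdiff] at this
          exact this.2 hx
      · intro a haH haVm b hbH hbVm
        rw [Finset.biUnion_insert] at haVm hbVm
        have haVm' : a ∉ P'.biUnion (fun p => {p.1, p.2}) :=
          fun h => haVm (Finset.mem_union_right _ h)
        have hbVm' : b ∉ P'.biUnion (fun p => {p.1, p.2}) :=
          fun h => hbVm (Finset.mem_union_right _ h)
        have haij : a ∉ ({(i, j).1, (i, j).2} : Finset α) :=
          fun h => haVm (Finset.mem_union_left _ h)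
        have hbij : b ∉ ({(i, j).1, (i, j).2} : Finset α) :=
          fun h => hbVm (Finset.mem_union_left _ h)
        have haH' : a ∈ H \ {i, j} := by
          rw [Finset.mem_sdiff]
          refine ⟨haH, fun h => haij (by simpa using h)⟩
        have hbH' : b ∈ H \ {i, j} := by
          rw [Finset.mem_sdiff]
          refine ⟨hbH, fun h => hbij (by simpa using h)⟩
        exact hP4 a haH' haVm' b hbH' hbVm'
    · push_neg at hex
      refine ⟨∅, by simp, by simp, by simp, ?_⟩
      intro a haH _ b hbH _
      exact hex a haH b hbH

lemma exists_sorted_edges : ∃ l : List (Sym2 V), l.Nodup ∧ (∀ e, e ∈ l ↔ e ∈ G.edgeSet) ∧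
    l.Pairwise (fun a b => (listE G hG r (lo G hG r b)).length ≤
      (listE G hG r (lo G hG r a)).length) := by
  set R : Sym2 V → Sym2 V → Prop := fun a b =>
    (listE G hG r (lo G hG r b)).length ≤ (listE G hG r (lo G hG r a)).length with hR
  haveI : IsTotal (Sym2 V) R := ⟨fun a b => le_total _ _⟩
  haveI : IsTrans (Sym2 V) R := ⟨fun a b c h1 h2 => le_trans h2 h1⟩
  refine ⟨List.insertionSort R G.edgeFinset.toList, ?_, ?_, ?_⟩
  · exact (List.perm_insertionSort R _).nodup_iff.2 G.edgeFinset.nodup_toList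
  · intro e
    rw [(List.perm_insertionSort R _).mem_iff, Finset.mem_toList, mem_edgeFinset]
  · exact List.pairwise_insertionSort R _

end TAPaux

open TAPaux

/-- (TAP rounding bound.) For an unweighted (shadow-complete) tree
augmentation instance on a tree `T` rooted at `r` with feasible fractional solution `z`,
there is a feasible set of links `S` with `|S| ≤ 2·z^{in}(L) + (3/2)·z^{cr}(L)`. -/
theorem tap_rounding_bound {V : Type*} [Fintype V] [DecidableEq V]
    (G : SimpleGraph V) (hG : G.IsTree) (r : V) (L : Finset (V × V)) (z : V × V → ℝ)
    (hz0 : ∀ ℓ, 0 ≤ z ℓ) (hzsupp : ∀ ℓ ∉ L, z ℓ = 0)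
    (hsc : ∀ ℓ ∈ L, ∀ p q : V,
      (∀ e ∈ (tpath G hG p q).edges, e ∈ (tpath G hG ℓ.1 ℓ.2).edges) → (p, q) ∈ L)
    (hfeas : ∀ e ∈ G.edgeSet, 1 ≤ ∑ ℓ ∈ L.filter (· ∈ covE G hG e), z ℓ) :
    ∃ S ⊆ L, (∀ e ∈ G.edgeSet, ∃ ℓ ∈ S, e ∈ (tpath G hG ℓ.1 ℓ.2).edges) ∧
      (S.card : ℝ) ≤ 2 * (∑ ℓ ∈ L, inPart G r z ℓ) +
        (3 / 2) * ∑ ℓ ∈ L, crPart G r z ℓ := by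
  classical
  obtain ⟨l0, hlnd, hlm, hlsort⟩ := exists_sorted_edges G hG r
  set t := run G hG r L l0 [] with ht
  have htsub : List.Sublist t l0 := run_sublist G hG r L l0 []
  have htmem : ∀ e ∈ t, e ∈ G.edgeSet := fun e he => (hlm e).1 (htsub.subset he)
  have hCne : ∀ e, e ∈ G.edgeSet → (Cand G hG L e).Nonempty := by
    intro e he
    by_contra hne
    rw [Finset.not_nonempty_iff_eq_empty] at hne
    have hf := hfeas e he
    have hfilter : L.filter (· ∈ covE G hG e) = Cand G hG L e :=
      Finset.filter_congr (fun x _ => Iff.rfl)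
    rw [hfilter, hne, Finset.sum_empty] at hf
    linarith
  have htrig : ∀ e ∈ t, e ∈ G.edgeSet ∧ (Cand G hG L e).Nonempty :=
    fun e he => ⟨htmem e he, hCne e (htmem e he)⟩
  have hPw : t.Pairwise (fun a b => (listE G hG r (lo G hG r b)).length ≤
      (listE G hG r (lo G hG r a)).length ∧
      b ∉ (tpath G hG (resp G hG r L a).1 (resp G hG r L a).2).edges) :=
    (hlsort.sublist htsub).and (run_pairwise G hG r L l0 [])
  -- the pieces
  set T := t.toFinset with hT
  set HiF := T.filter (fun e => high G hG r L e) with hHiF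
  set LoF := T.filter (fun e => ¬ high G hG r L e) with hLoF
  set K := L.filter (CrossLink G r) with hK
  set Lin := L.filter (fun x => ¬ CrossLink G r x) with hLin
  set cin : Sym2 V → ℝ :=
    fun e => ∑ x ∈ Lin.filter (fun x => e ∈ (tpath G hG x.1 x.2).edges), z x with hcin
  set ccr : Sym2 V → ℝ :=
    fun e => ∑ x ∈ K.filter (fun x => e ∈ (tpath G hG x.1 x.2).edges), z x with hccr
  set AdjH : Sym2 V → Sym2 V → Prop := fun i j => i ≠ j ∧ ∃ x ∈ L,
    (∀ f ∈ listE G hG r (lo G hG r i), f ∈ (tpath G hG x.1 x.2).edges) ∧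
    (∀ f ∈ listE G hG r (lo G hG r j), f ∈ (tpath G hG x.1 x.2).edges) with hAdjH
  obtain ⟨P, hPadj, hPsub, hPcard, hPmax⟩ :=
    exists_maximal_matching AdjH (fun i j h => h.1) HiF
  set Vm := P.biUnion (fun p => {p.1, p.2}) with hVm
  set U := HiF \ Vm with hU
  -- membership helpers
  have hHiT : ∀ e ∈ HiF, e ∈ t := by
    intro e he
    rw [hHiF, Finset.mem_filter, hT, List.mem_toFinset] at he
    exact he.1
  have hHihigh : ∀ e ∈ HiF, high G hG r L e := by
    intro e he
    rw [hHiF, Finset.mem_filter] at he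
    exact he.2
  have hVmHi : Vm ⊆ HiF := hPsub
  have hmemVm : ∀ p ∈ P, p.1 ∈ Vm ∧ p.2 ∈ Vm := by
    intro p hp
    constructor <;> exact Finset.mem_biUnion.2 ⟨p, hp, by simp⟩
  -- the per-pair path facts
  have hpair : ∀ p ∈ P,
      (∀ f ∈ listE G hG r (lo G hG r p.1),
        f ∈ (tpath G hG (lo G hG r p.1) (lo G hG r p.2)).edges) ∧
      (∀ f ∈ listE G hG r (lo G hG r p.2),
        f ∈ (tpath G hG (lo G hG r p.1) (lo G hG r p.2)).edges) := by
    intro p hp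
    obtain ⟨hne, x, hxL, hc1, hc2⟩ := hPadj p hp
    have h1t : p.1 ∈ t := hHiT _ (hVmHi (hmemVm p hp).1)
    have h2t : p.2 ∈ t := hHiT _ (hVmHi (hmemVm p hp).2)
    have hdisj := cones_disjoint G hG r L hPw htrig h1t h2t hne hxL hc1 hc2
    exact pair_path G hG r (fun f hf1 hf2 => hdisj f hf1 hf2)
  -- the solution set
  set S := (LoF.image (resp G hG r L)) ∪ (U.image (fun e => (lo G hG r e, r))) ∪
    (P.image (fun p => (lo G hG r p.1, lo G hG r p.2))) with hS
  refine ⟨S, ?_, ?_, ?_⟩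
  -- S ⊆ L
  · intro x hx
    rw [hS] at hx
    rcases Finset.mem_union.1 hx with hx | hx
    · rcases Finset.mem_union.1 hx with hx | hx
      · obtain ⟨e, he, rfl⟩ := Finset.mem_image.1 hx
        rw [hLoF, Finset.mem_filter, hT, List.mem_toFinset] at he
        exact resp_mem G hG r L hsc (htmem e he.1) (htrig e he.1).2
      · obtain ⟨e, he, rfl⟩ := Finset.mem_image.1 hx
        exact uplink_mem G hG r L hsc (hHihigh e (Finset.mem_sdiff.1 he).1)
    · obtain ⟨p, hp, rfl⟩ := Finset.mem_image.1 hx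
      obtain ⟨hne, x, hxL, hc1, hc2⟩ := hPadj p hp
      apply hsc x hxL
      intro f hf
      rcases bridge_union G hG r (l := (lo G hG r p.1, lo G hG r p.2)) hf with h | h
      · exact hc1 f h
      · exact hc2 f h
  -- feasibility
  · intro e he
    have hel : e ∈ l0 := (hlm e).2 he
    have hcov := run_covers G hG r L l0 []
      (fun g hg => ⟨(hlm g).1 hg, hCne g ((hlm g).1 hg)⟩) e hel
    obtain ⟨lk, hlk, hle⟩ := hcov
    rw [List.append_nil, List.mem_map] at hlk
    obtain ⟨a, hat, rfl⟩ := hlk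
    by_cases hh : high G hG r L a
    · have haHi : a ∈ HiF := by
        rw [hHiF, Finset.mem_filter, hT, List.mem_toFinset]
        exact ⟨hat, hh⟩
      have hre : resp G hG r L a = (lo G hG r a, r) := by rw [resp, if_pos hh]
      rw [hre] at hle
      have helist : e ∈ listE G hG r (lo G hG r a) := hle
      by_cases hVma : a ∈ Vm
      · obtain ⟨p, hpP, hav⟩ := Finset.mem_biUnion.1 hVma
        refine ⟨(lo G hG r p.1, lo G hG r p.2), ?_, ?_⟩
        · rw [hS]
          exact Finset.mem_union_right _ (Finset.mem_image.2 ⟨p, hpP, rfl⟩)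
        · simp only [Finset.mem_insert, Finset.mem_singleton] at hav
          rcases hav with rfl | rfl
          · exact (hpair p hpP).1 e helist
          · exact (hpair p hpP).2 e helist
      · refine ⟨(lo G hG r a, r), ?_, hle⟩
        rw [hS]
        refine Finset.mem_union_left _ (Finset.mem_union_right _ ?_)
        exact Finset.mem_image.2 ⟨a, by rw [hU, Finset.mem_sdiff]; exact ⟨haHi, hVma⟩, rfl⟩
    · refine ⟨resp G hG r L a, ?_, hle⟩
      rw [hS]
      refine Finset.mem_union_left _ (Finset.mem_union_left _ ?_)
      refine Finset.mem_image.2 ⟨a, ?_, rfl⟩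
      rw [hLoF, Finset.mem_filter, hT, List.mem_toFinset]
      exact ⟨hat, hh⟩
  -- cardinality bound
  · -- basic counting of S
    have hScard : (S.card : ℝ) ≤ (LoF.card : ℝ) + (U.card : ℝ) + (P.card : ℝ) := by
      have h1 : S.card ≤ LoF.card + U.card + P.card := by
        calc S.card ≤ ((LoF.image (resp G hG r L)) ∪
            (U.image (fun e => (lo G hG r e, r)))).card +
            (P.image (fun p => (lo G hG r p.1, lo G hG r p.2))).card :=
              Finset.card_union_le _ _
          _ ≤ ((LoF.image (resp G hG r L)).card +
              (U.image (fun e => (lo G hG r e, r))).card) +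
              (P.image (fun p => (lo G hG r p.1, lo G hG r p.2))).card := by
                have := Finset.card_union_le (LoF.image (resp G hG r L))
                  (U.image (fun e => (lo G hG r e, r)))
                omega
          _ ≤ LoF.card + U.card + P.card := by
                have i1 := Finset.card_image_le (s := LoF) (f := resp G hG r L)
                have i2 := Finset.card_image_le (s := U) (f := fun e => (lo G hG r e, r))
                have i3 := Finset.card_image_le (s := P)
                  (f := fun p => (lo G hG r p.1, lo G hG r p.2))
                omega
      exact_mod_cast h1
    -- per-trigger coverage inequality
    have hTfeas : ∀ e ∈ T, (1 : ℝ) ≤ cin e + ccr e := by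
      intro e heT
      rw [hT, List.mem_toFinset] at heT
      have he := htmem e heT
      have hf := hfeas e he
      have hfilter : L.filter (· ∈ covE G hG e) =
          L.filter (fun x => e ∈ (tpath G hG x.1 x.2).edges) :=
        Finset.filter_congr (fun x _ => Iff.rfl)
      rw [hfilter] at hf
      have hsplit := Finset.sum_filter_add_sum_filter_not
        (L.filter (fun x => e ∈ (tpath G hG x.1 x.2).edges)) (CrossLink G r) z
      have hswap1 : (L.filter (fun x => e ∈ (tpath G hG x.1 x.2).edges)).filter
          (CrossLink G r) = K.filter (fun x => e ∈ (tpath G hG x.1 x.2).edges) := by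
        rw [hK, Finset.filter_filter, Finset.filter_filter]
        exact Finset.filter_congr (fun x _ => and_comm)
      have hswap2 : (L.filter (fun x => e ∈ (tpath G hG x.1 x.2).edges)).filter
          (fun x => ¬ CrossLink G r x) =
          Lin.filter (fun x => e ∈ (tpath G hG x.1 x.2).edges) := by
        rw [hLin, Finset.filter_filter, Finset.filter_filter]
        exact Finset.filter_congr (fun x _ => and_comm)
      rw [hswap1, hswap2] at hsplit
      rw [hcin, hccr]
      rw [← hsplit] at hf
      linarith
    have hcin0 : ∀ e, 0 ≤ cin e := by
      intro e
      exact Finset.sum_nonneg (fun x _ => hz0 x)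
    have hccr0 : ∀ e, 0 ≤ ccr e := by
      intro e
      exact Finset.sum_nonneg (fun x _ => hz0 x)
    -- low triggers have no cross coverage
    have hLo0 : ∀ e ∈ LoF, ccr e = 0 := by
      intro e heLo
      rw [hLoF, Finset.mem_filter] at heLo
      have hempty : K.filter (fun x => e ∈ (tpath G hG x.1 x.2).edges) = ∅ := by
        apply Finset.eq_empty_of_forall_notMem
        intro x hx
        rw [Finset.mem_filter, hK, Finset.mem_filter] at hx
        exact heLo.2 (cross_trigger_high G hG r L hx.1.1 hx.1.2 hx.2).1
      rw [hccr]
      simp only [hempty, Finset.sum_empty]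
    -- sums over pieces
    have hLoT : LoF ⊆ T := Finset.filter_subset _ _
    have hHiT' : HiF ⊆ T := Finset.filter_subset _ _
    have hUT : U ⊆ T := fun e he => hHiT' ((Finset.mem_sdiff.1 he).1)
    have hVmT : Vm ⊆ T := fun e he => hHiT' (hVmHi he)
    have hLoCard : (LoF.card : ℝ) ≤ ∑ e ∈ LoF, cin e := by
      have hone : ∀ e ∈ LoF, (1 : ℝ) ≤ cin e := by
        intro e he
        have h1 := hTfeas e (hLoT he)
        rw [hLo0 e he] at h1
        linarith
      calc (LoF.card : ℝ) = ∑ _e ∈ LoF, (1 : ℝ) := by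
            rw [Finset.sum_const, nsmul_eq_mul, mul_one]
        _ ≤ ∑ e ∈ LoF, cin e := Finset.sum_le_sum hone
    have hUCard : (U.card : ℝ) ≤ ∑ e ∈ U, (cin e + ccr e) := by
      calc (U.card : ℝ) = ∑ _e ∈ U, (1 : ℝ) := by
            rw [Finset.sum_const, nsmul_eq_mul, mul_one]
        _ ≤ ∑ e ∈ U, (cin e + ccr e) :=
            Finset.sum_le_sum (fun e he => hTfeas e (hUT he))
    have hVmCard : (Vm.card : ℝ) ≤ ∑ e ∈ Vm, (cin e + ccr e) := by
      calc (Vm.card : ℝ) = ∑ _e ∈ Vm, (1 : ℝ) := by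
            rw [Finset.sum_const, nsmul_eq_mul, mul_one]
        _ ≤ ∑ e ∈ Vm, (cin e + ccr e) :=
            Finset.sum_le_sum (fun e he => hTfeas e (hVmT he))
    -- double counting
    have hswap : ∀ (M : Finset (V × V)) (W : Finset (Sym2 V)),
        (∑ e ∈ W, ∑ x ∈ M.filter (fun x => e ∈ (tpath G hG x.1 x.2).edges), z x) =
        ∑ x ∈ M, z x * ((W.filter (fun e => e ∈ (tpath G hG x.1 x.2).edges)).card : ℝ) := by
      intro M W
      have h1 : ∀ e : Sym2 V, (∑ x ∈ M.filter (fun x => e ∈ (tpath G hG x.1 x.2).edges), z x)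
          = ∑ x ∈ M, if e ∈ (tpath G hG x.1 x.2).edges then z x else 0 :=
        fun e => Finset.sum_filter _ _
      rw [Finset.sum_congr rfl (fun e _ => h1 e), Finset.sum_comm]
      apply Finset.sum_congr rfl
      intro x _
      rw [← Finset.sum_filter, Finset.sum_const, nsmul_eq_mul, mul_comm]
    have hTcin : ∑ e ∈ T, cin e ≤ 2 * ∑ x ∈ Lin, z x := by
      have h2 : ∀ x ∈ Lin, z x *
          ((T.filter (fun e => e ∈ (tpath G hG x.1 x.2).edges)).card : ℝ) ≤ 2 * z x := by
        intro x hx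
        have hxL : x ∈ L := Finset.mem_of_mem_filter x hx
        have hc := trigger_count G hG r L hPw htrig hxL
        rw [← hT] at hc
        have hc' : ((T.filter (fun e => e ∈ (tpath G hG x.1 x.2).edges)).card : ℝ) ≤ 2 := by
          exact_mod_cast hc
        calc z x * ((T.filter (fun e => e ∈ (tpath G hG x.1 x.2).edges)).card : ℝ)
            ≤ z x * 2 := mul_le_mul_of_nonneg_left hc' (hz0 x)
          _ = 2 * z x := mul_comm _ _
      calc ∑ e ∈ T, cin e
          = ∑ x ∈ Lin, z x *
            ((T.filter (fun e => e ∈ (tpath G hG x.1 x.2).edges)).card : ℝ) := hswap Lin T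
        _ ≤ ∑ x ∈ Lin, 2 * z x := Finset.sum_le_sum h2
        _ = 2 * ∑ x ∈ Lin, z x := by rw [Finset.mul_sum]
    -- cross coefficient bound
    have hdisjUVm : Disjoint U Vm := Finset.sdiff_disjoint
    have hUV : U ∪ Vm = HiF := by rw [hU]; exact Finset.sdiff_union_of_subset hPsub
    have hcross : (∑ e ∈ U, ccr e) + (1/2) * ∑ e ∈ Vm, ccr e ≤ (3/2) * ∑ x ∈ K, z x := by
      have hper : ∀ x ∈ K, z x *
            ((U.filter (fun e => e ∈ (tpath G hG x.1 x.2).edges)).card : ℝ) +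
          (1/2) * (z x *
            ((Vm.filter (fun e => e ∈ (tpath G hG x.1 x.2).edges)).card : ℝ)) ≤
          (3/2) * z x := by
        intro x hx
        have hxL : x ∈ L := Finset.mem_of_mem_filter x hx
        have hxCr : CrossLink G r x := (Finset.mem_filter.1 hx).2
        have hsum2 : (U.filter (fun e => e ∈ (tpath G hG x.1 x.2).edges)).card +
            (Vm.filter (fun e => e ∈ (tpath G hG x.1 x.2).edges)).card ≤ 2 := by
          have hcup : (U.filter (fun e => e ∈ (tpath G hG x.1 x.2).edges)) ∪
              (Vm.filter (fun e => e ∈ (tpath G hG x.1 x.2).edges)) =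
              HiF.filter (fun e => e ∈ (tpath G hG x.1 x.2).edges) := by
            rw [← Finset.filter_union, hUV]
          have hdisjf : Disjoint (U.filter (fun e => e ∈ (tpath G hG x.1 x.2).edges))
              (Vm.filter (fun e => e ∈ (tpath G hG x.1 x.2).edges)) :=
            Finset.disjoint_filter_filter hdisjUVm
          have hcardu := Finset.card_union_of_disjoint hdisjf
          rw [hcup] at hcardu
          have hsubT : HiF.filter (fun e => e ∈ (tpath G hG x.1 x.2).edges) ⊆
              T.filter (fun e => e ∈ (tpath G hG x.1 x.2).edges) :=
            Finset.filter_subset_filter _ hHiT'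
          have h2 := trigger_count G hG r L hPw htrig hxL
          rw [← hT] at h2
          have h4 := Finset.card_le_card hsubT
          omega
        have hU1 : (U.filter (fun e => e ∈ (tpath G hG x.1 x.2).edges)).card ≤ 1 := by
          by_contra hc
          have hgt : 1 < (U.filter (fun e => e ∈ (tpath G hG x.1 x.2).edges)).card := by
            omega
          obtain ⟨a, ha, b, hb, hab⟩ := Finset.one_lt_card.1 hgt
          rw [Finset.mem_filter] at ha hb
          have haHi := (Finset.mem_sdiff.1 ha.1).1
          have hbHi := (Finset.mem_sdiff.1 hb.1).1
          have haVm := (Finset.mem_sdiff.1 ha.1).2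
          have hbVm := (Finset.mem_sdiff.1 hb.1).2
          have hconea := (cross_trigger_high G hG r L hxL hxCr ha.2).2
          have hconeb := (cross_trigger_high G hG r L hxL hxCr hb.2).2
          exact hPmax a haHi haVm b hbHi hbVm ⟨hab, x, hxL, hconea, hconeb⟩
        have hcast : ((U.filter (fun e => e ∈ (tpath G hG x.1 x.2).edges)).card : ℝ) +
            ((Vm.filter (fun e => e ∈ (tpath G hG x.1 x.2).edges)).card : ℝ) / 2 ≤ 3/2 := by
          have h3 : 2 * (U.filter (fun e => e ∈ (tpath G hG x.1 x.2).edges)).card +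
              (Vm.filter (fun e => e ∈ (tpath G hG x.1 x.2).edges)).card ≤ 3 := by omega
          have h3' : (2 : ℝ) * ((U.filter (fun e => e ∈ (tpath G hG x.1 x.2).edges)).card : ℝ) +
              ((Vm.filter (fun e => e ∈ (tpath G hG x.1 x.2).edges)).card : ℝ) ≤ 3 := by
            exact_mod_cast h3
          linarith
        calc z x * ((U.filter (fun e => e ∈ (tpath G hG x.1 x.2).edges)).card : ℝ) +
            (1/2) * (z x * ((Vm.filter (fun e => e ∈ (tpath G hG x.1 x.2).edges)).card : ℝ))
            = z x * (((U.filter (fun e => e ∈ (tpath G hG x.1 x.2).edges)).card : ℝ) +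
              ((Vm.filter (fun e => e ∈ (tpath G hG x.1 x.2).edges)).card : ℝ) / 2) := by ring
          _ ≤ z x * (3/2) := mul_le_mul_of_nonneg_left hcast (hz0 x)
          _ = (3/2) * z x := mul_comm _ _
      have e1 : (∑ e ∈ U, ccr e) =
          ∑ x ∈ K, z x * ((U.filter (fun e => e ∈ (tpath G hG x.1 x.2).edges)).card : ℝ) :=
        hswap K U
      have e2 : (∑ e ∈ Vm, ccr e) =
          ∑ x ∈ K, z x * ((Vm.filter (fun e => e ∈ (tpath G hG x.1 x.2).edges)).card : ℝ) :=
        hswap K Vm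
      rw [e1, e2, Finset.mul_sum, Finset.mul_sum, ← Finset.sum_add_distrib]
      exact Finset.sum_le_sum hper
    -- splitting sums over T
    have hsplitT : (∑ e ∈ HiF, cin e) + (∑ e ∈ LoF, cin e) = ∑ e ∈ T, cin e :=
      Finset.sum_filter_add_sum_filter_not T (fun e => high G hG r L e) cin
    have hsplitHi : ∑ e ∈ HiF, cin e = (∑ e ∈ U, cin e) + (∑ e ∈ Vm, cin e) := by
      rw [← hUV, Finset.sum_union hdisjUVm]
    have hsplitHi2 : (∑ e ∈ U, (cin e + ccr e)) = (∑ e ∈ U, cin e) + ∑ e ∈ U, ccr e :=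
      Finset.sum_add_distrib
    have hsplitVm2 : (∑ e ∈ Vm, (cin e + ccr e)) = (∑ e ∈ Vm, cin e) + ∑ e ∈ Vm, ccr e :=
      Finset.sum_add_distrib
    -- matching size
    have hPc : (P.card : ℝ) ≤ (1/2) * ∑ e ∈ Vm, (cin e + ccr e) := by
      have hv : ((Vm.card : ℕ) : ℝ) = 2 * (P.card : ℝ) := by exact_mod_cast hPcard
      linarith
    -- RHS conversions
    have hinP : ∑ x ∈ L, inPart G r z x = ∑ x ∈ Lin, z x := by
      rw [hLin, Finset.sum_filter]
      apply Finset.sum_congr rfl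
      intro x _
      rw [inPart]
      by_cases h : CrossLink G r x <;> simp [h]
    have hcrP : ∑ x ∈ L, crPart G r z x = ∑ x ∈ K, z x := by
      rw [hK, Finset.sum_filter]
      apply Finset.sum_congr rfl
      intro x _
      rw [crPart]
    -- nonnegativity of cin sums over Vm
    have hVmcin : 0 ≤ ∑ e ∈ Vm, cin e := Finset.sum_nonneg (fun e _ => hcin0 e)
    -- final chain
    rw [hinP, hcrP]
    calc (S.card : ℝ) ≤ (LoF.card : ℝ) + (U.card : ℝ) + (P.card : ℝ) := hScard
      _ ≤ (∑ e ∈ LoF, cin e) + (∑ e ∈ U, (cin e + ccr e)) +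
          (1/2) * ∑ e ∈ Vm, (cin e + ccr e) := by linarith
      _ = ((∑ e ∈ LoF, cin e) + (∑ e ∈ U, cin e) + (1/2) * ∑ e ∈ Vm, cin e) +
          ((∑ e ∈ U, ccr e) + (1/2) * ∑ e ∈ Vm, ccr e) := by
            rw [hsplitHi2, hsplitVm2]; ring
      _ ≤ ((∑ e ∈ LoF, cin e) + (∑ e ∈ U, cin e) + (∑ e ∈ Vm, cin e)) +
          ((3/2) * ∑ x ∈ K, z x) := by linarith
      _ = (∑ e ∈ T, cin e) + (3/2) * ∑ x ∈ K, z x := by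
            rw [← hsplitT, hsplitHi]; ring
      _ ≤ 2 * (∑ x ∈ Lin, z x) + (3/2) * ∑ x ∈ K, z x := by linarith
end
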